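/- arXiv:1006.2884 — 4 statements merged into one kernel-verified Lean document; each statement's English description precedes it below -/
import Mathlib

section
/- Let $f_1, \ldots, f_M$ be measurable functions on $\mathbb{R}^n$, let $\gamma$ be a fractional partition of $[M]$ using the hypergraph $\mathcal{S}$, and let $q_{\mathbf{s}} > 0$ be coefficients satisfying $\sum_{\mathbf{s} \in \mathcal{S}} \gamma_{\mathbf{s}} / q_{\mathbf{s}} = 1/r$. Then $\| \prod_{j \in [M]} f_j \|_r \le \prod_{\mathbf{s} \in \mathcal{S}} \| \prod_{j \in \mathbf{s}} f_j \|_{q_{\mathbf{s}}}^{\gamma_{\mathbf{s}}}$. -/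
open MeasureTheory ENNReal

lemma ennreal_rpow_finset_sum {ι : Type*} (a : ℝ≥0∞) (s : Finset ι) (γ : ι → ℝ)
    (h : ∀ i ∈ s, 0 ≤ γ i) : a ^ (∑ i ∈ s, γ i) = ∏ i ∈ s, a ^ γ i := by
  induction s using Finset.cons_induction with
  | empty => simp
  | cons i s hi ih =>
    rw [Finset.sum_cons, Finset.prod_cons,
      ENNReal.rpow_add_of_nonneg _ _ (h i (Finset.mem_cons_self i s))
        (Finset.sum_nonneg fun j hj => h j (Finset.mem_cons_of_mem hj)),
      ih (fun j hj => h j (Finset.mem_cons_of_mem hj))]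

/-- Fractional Hölder inequality: if `γ` is a fractional partition of `[M]` using the
hypergraph `S` and `∑ s in S, γ s / q s = 1 / r` with all `q s, r > 0`, then
`‖∏ j, f j‖_r ≤ ∏ s in S, ‖∏ j in s, f j‖_{q s} ^ (γ s)`. -/
theorem fractional_holder (n M : ℕ)
    (f : Fin M → EuclideanSpace ℝ (Fin n) → ℝ) (hf : ∀ j, Measurable (f j))
    (S : Finset (Finset (Fin M))) (γ : Finset (Fin M) → ℝ)
    (hγ0 : ∀ s ∈ S, 0 ≤ γ s) (hγ1 : ∀ s ∈ S, γ s ≤ 1)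
    (hpart : ∀ i : Fin M, ∑ s ∈ S.filter (fun s => i ∈ s), γ s = 1)
    (q : Finset (Fin M) → ℝ) (hq : ∀ s ∈ S, 0 < q s) (r : ℝ) (hr : 0 < r)
    (hsum : ∑ s ∈ S, γ s / q s = 1 / r) :
    eLpNorm (fun x => ∏ j, f j x) (ENNReal.ofReal r) volume
      ≤ ∏ s ∈ S,
          (eLpNorm (fun x => ∏ j ∈ s, f j x) (ENNReal.ofReal (q s)) volume) ^ (γ s) := by
  classical
  set a : Fin M → EuclideanSpace ℝ (Fin n) → ℝ≥0∞ := fun j x => (‖f j x‖₊ : ℝ≥0∞) with ha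
  have ham : ∀ j, Measurable (a j) := fun j => (hf j).nnnorm.coe_nnreal_ennreal
  -- the exponents for multi-Hölder
  set p : Finset (Fin M) → ℝ := fun s => γ s * r / q s with hp
  have hp0 : ∀ s ∈ S, 0 ≤ p s := fun s hs =>
    div_nonneg (mul_nonneg (hγ0 s hs) hr.le) (hq s hs).le
  have hpsum : ∑ s ∈ S, p s = 1 := by
    have h1 : ∑ s ∈ S, p s = r * ∑ s ∈ S, γ s / q s := by
      rw [Finset.mul_sum]
      refine Finset.sum_congr rfl fun s hs => ?_
      rw [hp]; ring
    rw [h1, hsum]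
    field_simp
  -- rewrite LHS eLpNorm
  have hrne : (ENNReal.ofReal r) ≠ 0 := by
    simp [ENNReal.ofReal_eq_zero, not_le, hr]
  rw [eLpNorm_eq_lintegral_rpow_enorm_toReal hrne ENNReal.ofReal_ne_top,
    ENNReal.toReal_ofReal hr.le]
  -- rewrite RHS eLpNorms
  have hrw : ∀ s ∈ S, eLpNorm (fun x => ∏ j ∈ s, f j x) (ENNReal.ofReal (q s)) volume
      = (∫⁻ x, (∏ j ∈ s, a j x) ^ q s) ^ (1 / q s) := by
    intro s hs
    rw [eLpNorm_eq_lintegral_rpow_enorm_toReal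
        (by simp [ENNReal.ofReal_eq_zero, not_le, hq s hs]) ENNReal.ofReal_ne_top,
      ENNReal.toReal_ofReal (hq s hs).le]
    congr 1
    refine lintegral_congr fun x => ?_
    congr 1
    rw [ha]
    push_cast [nnnorm_prod]
    rw [enorm_eq_nnnorm, nnnorm_prod, ENNReal.coe_finset_prod]
  rw [Finset.prod_congr rfl (fun s hs => by rw [hrw s hs])]
  -- pointwise identity
  have hpt : ∀ x, ((‖∏ j, f j x‖₊ : ℝ≥0∞)) ^ r
      = ∏ s ∈ S, ((∏ j ∈ s, a j x) ^ q s) ^ p s := by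
    intro x
    have h1 : ∀ s ∈ S, ((∏ j ∈ s, a j x) ^ q s) ^ p s
        = ∏ j ∈ s, (a j x) ^ (γ s * r) := by
      intro s hs
      rw [← ENNReal.rpow_mul]
      have hqp : q s * p s = γ s * r := by
        have hqs := (hq s hs).ne'
        rw [hp]
        field_simp
      rw [hqp, ← ENNReal.prod_rpow_of_nonneg (mul_nonneg (hγ0 s hs) hr.le)]
    rw [Finset.prod_congr rfl h1]
    have hcomm : (∏ s ∈ S, ∏ j ∈ s, (a j x) ^ (γ s * r))
        = ∏ j : Fin M, ∏ s ∈ S.filter (fun s => j ∈ s), (a j x) ^ (γ s * r) := by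
      refine Finset.prod_comm' fun s j => ?_
      simp [Finset.mem_filter, and_comm]
    rw [hcomm]
    have h2 : ∀ j : Fin M, (∏ s ∈ S.filter (fun s => j ∈ s), (a j x) ^ (γ s * r))
        = (a j x) ^ r := by
      intro j
      rw [← ennreal_rpow_finset_sum (a j x) _ _
        (fun s hs => mul_nonneg (hγ0 s (Finset.mem_filter.mp hs).1) hr.le),
        ← Finset.sum_mul, hpart j, one_mul]
    rw [Finset.prod_congr rfl fun j _ => h2 j,
      ENNReal.prod_rpow_of_nonneg hr.le]
    congr 1
    rw [ha]
    push_cast [nnnorm_prod]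
    rfl
  -- apply multi-Hölder
  have key := ENNReal.lintegral_prod_norm_pow_le (μ := volume) S
      (f := fun s x => (∏ j ∈ s, a j x) ^ q s)
      (fun s _ => ((Finset.measurable_prod s fun j _ => ham j).pow_const (q s)).aemeasurable)
      hpsum hp0
  calc (∫⁻ x, ((‖∏ j, f j x‖₊ : ℝ≥0∞)) ^ r) ^ (1 / r)
      = (∫⁻ x, ∏ s ∈ S, ((∏ j ∈ s, a j x) ^ q s) ^ p s) ^ (1 / r) := by
        rw [lintegral_congr hpt]
    _ ≤ (∏ s ∈ S, (∫⁻ x, (∏ j ∈ s, a j x) ^ q s) ^ p s) ^ (1 / r) :=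
        ENNReal.rpow_le_rpow key (by positivity)
    _ = ∏ s ∈ S, ((∫⁻ x, (∏ j ∈ s, a j x) ^ q s) ^ (1 / q s)) ^ (γ s) := by
        rw [← ENNReal.prod_rpow_of_nonneg (by positivity : (0:ℝ) ≤ 1 / r)]
        refine Finset.prod_congr rfl fun s hs => ?_
        rw [← ENNReal.rpow_mul, ← ENNReal.rpow_mul]
        congr 1
        have hqs := (hq s hs).ne'
        rw [hp]
        field_simp
end

section
/- Normalized leave-one-out Brunn-Minkowski inequality: for nonempty convex sets $K_1, \ldots, K_M$ in $\mathbb{R}^n$ with $M \ge 2$, $\left|\frac{K_1 + \cdots + K_M}{M}\right|^{1/n} \ge \frac{1}{M} \sum_{i=1}^M \left| \frac{\sum_{j \ne i} K_j}{M-1} \right|^{1/n}$. -/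
open Pointwise MeasureTheory ENNReal


lemma oneDim_sumset (K L : Set ℝ) (hK : IsCompact K) (hL : IsCompact L)
    (hKne : K.Nonempty) (hLne : L.Nonempty) :
    volume K + volume L ≤ volume (K + L) := by
  set a := sSup K with ha
  set b := sInf L with hb
  have haK : a ∈ K := hK.sSup_mem hKne
  have hbL : b ∈ L := hL.sInf_mem hLne
  set P : Set ℝ := (· + b) '' K with hP
  set Q : Set ℝ := (a + ·) '' L with hQ
  have hPsub : P ⊆ K + L := by
    rintro _ ⟨x, hx, rfl⟩; exact Set.add_mem_add hx hbL
  have hQsub : Q ⊆ K + L := by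
    rintro _ ⟨y, hy, rfl⟩; exact Set.add_mem_add haK hy
  have hPQ : P ∩ Q ⊆ {a + b} := by
    rintro z ⟨⟨x, hx, rfl⟩, ⟨y, hy, hz⟩⟩
    have h1 : x ≤ a := le_csSup hK.bddAbove hx
    have h2 : b ≤ y := csInf_le hL.bddBelow hy
    simp only at hz
    have : x + b = a + b := by nlinarith [hz]
    simp [this]
  have hvolP : volume P = volume K := by
    have : P = (fun x => x + b) '' K := rfl
    rw [this, Set.image_add_right]
    exact measure_preimage_add_right volume (-b) K
  have hvolQ : volume Q = volume L := by
    have : Q = (fun y => a + y) '' L := rfl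
    rw [this, Set.image_add_left]
    exact measure_preimage_add volume (-a) L
  have hQm : MeasurableSet (Q \ {a + b}) :=
    ((hL.image (continuous_add_left a)).measurableSet).diff (measurableSet_singleton _)
  have hdisj : Disjoint P (Q \ {a + b}) := by
    rw [Set.disjoint_left]
    rintro z hzP ⟨hzQ, hzne⟩
    exact hzne (hPQ ⟨hzP, hzQ⟩)
  calc volume K + volume L = volume P + volume (Q \ {a + b}) := by
        rw [hvolP, measure_diff_null (measure_singleton _), hvolQ]
    _ = volume (P ∪ (Q \ {a + b})) := (measure_union hdisj hQm).symm
    _ ≤ volume (K + L) := measure_mono (Set.union_subset hPsub (fun z hz => hQsub hz.1))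

lemma oneDim_smul_sumset (a b : ℝ) (ha : 0 < a) (hb : 0 < b)
    (A B T : Set ℝ) (hA : MeasurableSet A) (hB : MeasurableSet B)
    (hAne : A.Nonempty) (hBne : B.Nonempty)
    (hT : a • A + b • B ⊆ T) :
    ENNReal.ofReal a * volume A + ENNReal.ofReal b * volume B ≤ volume T := by
  obtain ⟨x₀, hx₀⟩ := hAne
  obtain ⟨y₀, hy₀⟩ := hBne
  have smul_vol : ∀ (c : ℝ), 0 < c → ∀ (S : Set ℝ), volume (c • S) = ENNReal.ofReal c * volume S := by
    intro c hc S
    rw [Measure.addHaar_smul]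
    congr 2
    simp [abs_of_pos hc]
  have core : ∀ K L : Set ℝ, IsCompact K → IsCompact L → K ⊆ A → L ⊆ B →
      ENNReal.ofReal a * volume K + ENNReal.ofReal b * volume L ≤ volume T := by
    intro K L hKc hLc hKA hLB
    set K' := K ∪ {x₀} with hK'
    set L' := L ∪ {y₀} with hL'
    have hK'c : IsCompact K' := hKc.union isCompact_singleton
    have hL'c : IsCompact L' := hLc.union isCompact_singleton
    have hK'v : volume K' = volume K := by
      refine le_antisymm ?_ (measure_mono Set.subset_union_left)
      calc volume (K ∪ {x₀}) ≤ volume K + volume {x₀} := measure_union_le _ _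
        _ = volume K := by simp
    have hL'v : volume L' = volume L := by
      refine le_antisymm ?_ (measure_mono Set.subset_union_left)
      calc volume (L ∪ {y₀}) ≤ volume L + volume {y₀} := measure_union_le _ _
        _ = volume L := by simp
    have haK : IsCompact (a • K') := hK'c.image (continuous_const_smul a)
    have hbL : IsCompact (b • L') := hL'c.image (continuous_const_smul b)
    have hsub : a • K' + b • L' ⊆ T := by
      refine Set.Subset.trans ?_ hT
      apply Set.add_subset_add
      · exact Set.smul_set_mono (Set.union_subset hKA (by simpa using hx₀))
      · exact Set.smul_set_mono (Set.union_subset hLB (by simpa using hy₀))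
    calc ENNReal.ofReal a * volume K + ENNReal.ofReal b * volume L
        = volume (a • K') + volume (b • L') := by rw [smul_vol a ha, smul_vol b hb, hK'v, hL'v]
      _ ≤ volume (a • K' + b • L') :=
          oneDim_sumset _ _ haK hbL
            (Set.smul_set_nonempty.2 ⟨x₀, Set.mem_union_right _ rfl⟩)
            (Set.smul_set_nonempty.2 ⟨y₀, Set.mem_union_right _ rfl⟩)
      _ ≤ volume T := measure_mono hsub
  rw [hA.measure_eq_iSup_isCompact, hB.measure_eq_iSup_isCompact]
  simp_rw [ENNReal.mul_iSup]
  refine ENNReal.iSup_add_iSup_le fun K L => ?_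
  -- deal with nested prop-sups
  by_cases hKA : K ⊆ A
  · by_cases hKc : IsCompact K
    · simp only [hKA, hKc, iSup_pos]
      by_cases hLB : L ⊆ B
      · by_cases hLc : IsCompact L
        · simp only [hLB, hLc, iSup_pos]; exact core K L hKc hLc hKA hLB
        · rw [iSup_pos hLB, iSup_neg hLc, ENNReal.bot_eq_zero, add_zero]
          simpa using core K ∅ hKc isCompact_empty hKA (Set.empty_subset B)
      · rw [iSup_neg hLB, ENNReal.bot_eq_zero, add_zero]
        simpa using core K ∅ hKc isCompact_empty hKA (Set.empty_subset B)
    · rw [iSup_pos hKA, iSup_neg hKc, ENNReal.bot_eq_zero, zero_add]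
      refine iSup₂_le fun hLB hLc => ?_
      simpa using core ∅ L isCompact_empty hLc (Set.empty_subset A) hLB
  · rw [iSup_neg hKA, ENNReal.bot_eq_zero, zero_add]
    refine iSup₂_le fun hLB hLc => ?_
    simpa using core ∅ L isCompact_empty hLc (Set.empty_subset A) hLB

lemma my_iSup_rpow (a : ℝ) (ha : 0 < a) (f : ℕ → ℝ≥0∞) : (⨆ k, f k) ^ a = ⨆ k, (f k) ^ a := by
  have := (ENNReal.orderIsoRpow a ha).map_iSup f
  simpa only [ENNReal.orderIsoRpow_apply] using this

lemma ennreal_gm_am {a b : ℝ} (ha : 0 < a) (hb : 0 < b) (hab : a + b = 1) (x y : ℝ≥0∞) :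
    x ^ a * y ^ b ≤ ENNReal.ofReal a * x + ENNReal.ofReal b * y := by
  rcases eq_or_ne x ⊤ with hx | hx
  · rcases eq_or_ne y 0 with hy | hy
    · simp [hx, hy, ENNReal.zero_rpow_of_pos hb]
    · have h2 : ENNReal.ofReal a * x = ⊤ := by
        rw [hx, ENNReal.mul_top]
        simp [ENNReal.ofReal_eq_zero, not_le, ha]
      have h3 : ENNReal.ofReal a * x + ENNReal.ofReal b * y = ⊤ := by rw [h2, top_add]
      rw [h3]; exact le_top
  · rcases eq_or_ne y ⊤ with hy | hy
    · rcases eq_or_ne x 0 with hx0 | hx0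
      · simp [hy, hx0, ENNReal.zero_rpow_of_pos ha]
      · have h2 : ENNReal.ofReal b * y = ⊤ := by
          rw [hy, ENNReal.mul_top]
          simp [ENNReal.ofReal_eq_zero, not_le, hb]
        have h3 : ENNReal.ofReal a * x + ENNReal.ofReal b * y = ⊤ := by rw [h2, add_top]
        rw [h3]; exact le_top
    · lift x to NNReal using hx
      lift y to NNReal using hy
      rw [← ENNReal.coe_rpow_of_nonneg x ha.le, ← ENNReal.coe_rpow_of_nonneg y hb.le,
        ← ENNReal.coe_mul]
      have key := NNReal.geom_mean_le_arith_mean2_weighted (w₁ := a.toNNReal) (w₂ := b.toNNReal)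
        (p₁ := x) (p₂ := y) (by rw [← Real.toNNReal_add ha.le hb.le, hab]; simp)
      have ca : ((a.toNNReal : ℝ)) = a := Real.coe_toNNReal a ha.le
      have cb : ((b.toNNReal : ℝ)) = b := Real.coe_toNNReal b hb.le
      rw [ca, cb] at key
      calc ((x ^ a * y ^ b : NNReal) : ℝ≥0∞) ≤ ((a.toNNReal * x + b.toNNReal * y : NNReal) : ℝ≥0∞) := by
            exact_mod_cast key
        _ = ENNReal.ofReal a * x + ENNReal.ofReal b * y := by
            push_cast
            rw [ENNReal.ofReal, ENNReal.ofReal]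

/-- Layer cake for functions bounded by 1. -/
lemma layercake_le_one {α : Type*} [MeasurableSpace α] (μ : Measure α) [SigmaFinite μ]
    (F : α → ℝ≥0∞) (hF : Measurable F) (hF1 : ∀ x, F x ≤ 1) :
    ∫⁻ x, F x ∂μ = ∫⁻ t in Set.Ioo (0:ℝ) 1, μ {x | ENNReal.ofReal t < F x} := by
  have hFtop : ∀ x, F x ≠ ⊤ := fun x => (lt_of_le_of_lt (hF1 x) (by simp)).ne
  have hreal : ∀ x, ENNReal.ofReal ((F x).toReal) = F x := fun x => ENNReal.ofReal_toReal (hFtop x)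
  have hmble : AEMeasurable (fun x => (F x).toReal) μ := (hF.ennreal_toReal).aemeasurable
  have hnn : 0 ≤ᶠ[ae μ] fun x => (F x).toReal := Filter.Eventually.of_forall fun x => ENNReal.toReal_nonneg
  have lc := lintegral_eq_lintegral_meas_lt μ hnn hmble
  have e1 : ∫⁻ x, F x ∂μ = ∫⁻ t in Set.Ioi (0:ℝ), μ {x | t < (F x).toReal} := by
    rw [← lc]; exact lintegral_congr fun x => (hreal x).symm
  rw [e1]
  have hsplit : Set.Ioi (0:ℝ) = Set.Ioo (0:ℝ) 1 ∪ Set.Ici (1:ℝ) := by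
    ext t; simp only [Set.mem_Ioi, Set.mem_union, Set.mem_Ioo, Set.mem_Ici]
    constructor
    · intro h; rcases lt_or_ge t 1 with h1 | h1
      · exact Or.inl ⟨h, h1⟩
      · exact Or.inr h1
    · rintro (⟨h, _⟩ | h); exact h; linarith
  rw [hsplit, lintegral_union measurableSet_Ici (by
    rw [Set.disjoint_left]; rintro t ⟨_, h1⟩ h2; simp at h2; linarith)]
  have hzero : ∫⁻ t in Set.Ici (1:ℝ), μ {x | t < (F x).toReal} = 0 := by
    rw [setLIntegral_congr_fun measurableSet_Ici
      (fun t (ht : 1 ≤ t) => ?_), lintegral_zero]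
    have : {x | t < (F x).toReal} = ∅ := by
      ext x; simp only [Set.mem_setOf_eq, Set.mem_empty_iff_false, iff_false, not_lt]
      calc (F x).toReal ≤ 1 := by
            simpa using ENNReal.toReal_mono (by simp) (hF1 x)
        _ ≤ t := ht
    rw [this, measure_empty]
  rw [hzero, add_zero]
  refine setLIntegral_congr_fun measurableSet_Ioo (fun t ht => ?_)
  congr 1
  ext x
  simp only [Set.mem_setOf_eq]
  rw [ENNReal.ofReal_lt_iff_lt_toReal (le_of_lt ht.1) (hFtop x)]

lemma PL1_core {a b : ℝ} (ha : 0 < a) (hb : 0 < b) (hab : a + b = 1)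
    (f g h : ℝ → ℝ≥0∞) (hf : Measurable f) (hg : Measurable g) (hh : Measurable h)
    (hfs : ⨆ x, f x = 1) (hgs : ⨆ x, g x = 1)
    (hyp : ∀ x y, f x ^ a * g y ^ b ≤ h (a * x + b * y)) :
    ENNReal.ofReal a * (∫⁻ x, f x) + ENNReal.ofReal b * (∫⁻ x, g x) ≤ ∫⁻ x, h x := by
  have hf1 : ∀ x, f x ≤ 1 := fun x => hfs ▸ le_iSup f x
  have hg1 : ∀ x, g x ≤ 1 := fun x => hgs ▸ le_iSup g x
  set h' : ℝ → ℝ≥0∞ := fun z => min (h z) 1 with hh'def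
  have hh' : Measurable h' := hh.min measurable_const
  have hh'1 : ∀ z, h' z ≤ 1 := fun z => min_le_right _ _
  have hh'le : ∀ z, h' z ≤ h z := fun z => min_le_left _ _
  -- level sets
  set Ft : ℝ → Set ℝ := fun t => {x | ENNReal.ofReal t < f x} with hFt
  set Gt : ℝ → Set ℝ := fun t => {x | ENNReal.ofReal t < g x} with hGt
  set Ht : ℝ → Set ℝ := fun t => {x | ENNReal.ofReal t < h' x} with hHt
  have key : ∀ t ∈ Set.Ioo (0:ℝ) 1,
      ENNReal.ofReal a * volume (Ft t) + ENNReal.ofReal b * volume (Gt t) ≤ volume (Ht t) := by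
    intro t ht
    have htne : ENNReal.ofReal t ≠ 0 := by
      simp [ENNReal.ofReal_eq_zero, not_le, ht.1]
    have htlt1 : ENNReal.ofReal t < 1 := ENNReal.ofReal_lt_one.2 ht.2
    have hFne : (Ft t).Nonempty := by
      have : ENNReal.ofReal t < ⨆ x, f x := hfs ▸ htlt1
      obtain ⟨x, hx⟩ := lt_iSup_iff.mp this
      exact ⟨x, hx⟩
    have hGne : (Gt t).Nonempty := by
      have : ENNReal.ofReal t < ⨆ x, g x := hgs ▸ htlt1
      obtain ⟨x, hx⟩ := lt_iSup_iff.mp this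
      exact ⟨x, hx⟩
    refine oneDim_smul_sumset a b ha hb _ _ _ (hf measurableSet_Ioi) (hg measurableSet_Ioi)
      hFne hGne ?_
    rintro _ ⟨_, ⟨x, hx, rfl⟩, _, ⟨y, hy, rfl⟩, rfl⟩
    have hx' : ENNReal.ofReal t < f x := hx
    have hy' : ENNReal.ofReal t < g y := hy
    have step1 : (ENNReal.ofReal t) ^ a * (ENNReal.ofReal t) ^ b < f x ^ a * g y ^ b := by
      have h1 : (ENNReal.ofReal t) ^ a < f x ^ a := ENNReal.rpow_lt_rpow hx' ha
      have h2 : (ENNReal.ofReal t) ^ b < g y ^ b := ENNReal.rpow_lt_rpow hy' hb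
      have htb0 : (ENNReal.ofReal t) ^ b ≠ 0 := by
        simp [ENNReal.rpow_eq_zero_iff, htne, ENNReal.ofReal_ne_top]
      have htbt : (ENNReal.ofReal t) ^ b ≠ ⊤ := by
        simp [ENNReal.rpow_eq_top_iff, htne, ENNReal.ofReal_ne_top]
      calc (ENNReal.ofReal t) ^ a * (ENNReal.ofReal t) ^ b
          < f x ^ a * (ENNReal.ofReal t) ^ b := by
            exact ENNReal.mul_lt_mul_left htb0 htbt h1
        _ ≤ f x ^ a * g y ^ b := mul_le_mul_right h2.le _
    have htt : (ENNReal.ofReal t) ^ a * (ENNReal.ofReal t) ^ b = ENNReal.ofReal t := by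
      rw [← ENNReal.rpow_add a b htne ENNReal.ofReal_ne_top, hab, ENNReal.rpow_one]
    have hlt : ENNReal.ofReal t < h (a * x + b * y) :=
      lt_of_lt_of_le (htt ▸ step1) (hyp x y)
    show ENNReal.ofReal t < h' (a • x + b • y)
    simp only [smul_eq_mul, hh'def]
    exact lt_min hlt htlt1
  -- measurability in t of level-set volumes
  have hFanti : Antitone fun t => volume (Ft t) := by
    intro s t hst
    exact measure_mono fun x hx => lt_of_le_of_lt (ENNReal.ofReal_le_ofReal hst) hx
  have hGanti : Antitone fun t => volume (Gt t) := by
    intro s t hst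
    exact measure_mono fun x hx => lt_of_le_of_lt (ENNReal.ofReal_le_ofReal hst) hx
  have hHanti : Antitone fun t => volume (Ht t) := fun s t hst =>
    measure_mono fun x hx => lt_of_le_of_lt (ENNReal.ofReal_le_ofReal hst) hx
  calc ENNReal.ofReal a * (∫⁻ x, f x) + ENNReal.ofReal b * (∫⁻ x, g x)
      = ∫⁻ t in Set.Ioo (0:ℝ) 1, (ENNReal.ofReal a * volume (Ft t) + ENNReal.ofReal b * volume (Gt t)) := by
        rw [layercake_le_one volume f hf hf1, layercake_le_one volume g hg hg1,
          lintegral_add_left ((hFanti.measurable).const_mul _),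
          lintegral_const_mul _ hFanti.measurable, lintegral_const_mul _ hGanti.measurable]
    _ ≤ ∫⁻ t in Set.Ioo (0:ℝ) 1, volume (Ht t) := setLIntegral_mono hHanti.measurable key
    _ = ∫⁻ z, h' z := (layercake_le_one volume h' hh' hh'1).symm
    _ ≤ ∫⁻ z, h z := lintegral_mono hh'le

/-- 1-d Prékopa–Leindler for bounded functions. -/
lemma PL1_bdd {a b : ℝ} (ha : 0 < a) (hb : 0 < b) (hab : a + b = 1)
    (f g h : ℝ → ℝ≥0∞) (hf : Measurable f) (hg : Measurable g) (hh : Measurable h)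
    (c : ℝ≥0∞) (hc : c ≠ ⊤) (hfc : ∀ x, f x ≤ c) (hgc : ∀ x, g x ≤ c)
    (hyp : ∀ x y, f x ^ a * g y ^ b ≤ h (a * x + b * y)) :
    (∫⁻ x, f x) ^ a * (∫⁻ x, g x) ^ b ≤ ∫⁻ x, h x := by
  set Mf := ⨆ x, f x with hMf
  set Mg := ⨆ x, g x with hMg
  have hMfc : Mf ≤ c := iSup_le hfc
  have hMgc : Mg ≤ c := iSup_le hgc
  have hMft : Mf ≠ ⊤ := (lt_of_le_of_lt hMfc hc.lt_top).ne
  have hMgt : Mg ≠ ⊤ := (lt_of_le_of_lt hMgc hc.lt_top).ne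
  rcases eq_or_ne Mf 0 with hMf0 | hMf0
  · have : ∀ x, f x = 0 := fun x => le_antisymm (hMf0 ▸ le_iSup f x) (zero_le)
    rw [lintegral_congr this, lintegral_zero, ENNReal.zero_rpow_of_pos ha, zero_mul]
    exact zero_le
  rcases eq_or_ne Mg 0 with hMg0 | hMg0
  · have : ∀ x, g x = 0 := fun x => le_antisymm (hMg0 ▸ le_iSup g x) (zero_le)
    rw [lintegral_congr this, lintegral_zero, ENNReal.zero_rpow_of_pos hb, mul_zero]
    exact zero_le
  rcases eq_or_ne (∫⁻ x, f x) 0 with hIf0 | hIf0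
  · rw [hIf0, ENNReal.zero_rpow_of_pos ha, zero_mul]; exact zero_le
  rcases eq_or_ne (∫⁻ x, g x) 0 with hIg0 | hIg0
  · rw [hIg0, ENNReal.zero_rpow_of_pos hb, mul_zero]; exact zero_le
  have hMfi0 : Mf⁻¹ ≠ 0 := ENNReal.inv_ne_zero.2 hMft
  have hMfit : Mf⁻¹ ≠ ⊤ := ENNReal.inv_ne_top.2 hMf0
  have hMgi0 : Mg⁻¹ ≠ 0 := ENNReal.inv_ne_zero.2 hMgt
  have hMgit : Mg⁻¹ ≠ ⊤ := ENNReal.inv_ne_top.2 hMg0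
  set cst := Mf⁻¹ ^ a * Mg⁻¹ ^ b with hcst
  have hcst0 : cst ≠ 0 := by
    simp [hcst, mul_eq_zero, ENNReal.rpow_eq_zero_iff, hMfi0, hMgi0, hMfit, hMgit]
  have hcstt : cst ≠ ⊤ := by
    rw [hcst]
    exact ENNReal.mul_ne_top (by simp [ENNReal.rpow_eq_top_iff, hMfi0, hMfit])
      (by simp [ENNReal.rpow_eq_top_iff, hMgi0, hMgit])
  set f' := fun x => f x * Mf⁻¹ with hf'
  set g' := fun x => g x * Mg⁻¹ with hg'
  set h' := fun z => h z * cst with hh'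
  have hf's : (⨆ x, f' x) = 1 := by
    rw [hf']
    rw [← ENNReal.iSup_mul]
    exact ENNReal.mul_inv_cancel hMf0 hMft
  have hg's : (⨆ x, g' x) = 1 := by
    rw [hg']
    rw [← ENNReal.iSup_mul]
    exact ENNReal.mul_inv_cancel hMg0 hMgt
  have hftop : ∀ x, f x ≠ ⊤ := fun x => (lt_of_le_of_lt (hfc x) hc.lt_top).ne
  have hgtop : ∀ x, g x ≠ ⊤ := fun x => (lt_of_le_of_lt (hgc x) hc.lt_top).ne
  have hyp' : ∀ x y, f' x ^ a * g' y ^ b ≤ h' (a * x + b * y) := by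
    intro x y
    rw [hf', hg', hh']
    rw [ENNReal.mul_rpow_of_ne_top (hftop x) hMfit, ENNReal.mul_rpow_of_ne_top (hgtop y) hMgit]
    calc f x ^ a * Mf⁻¹ ^ a * (g y ^ b * Mg⁻¹ ^ b)
        = f x ^ a * g y ^ b * cst := by rw [hcst]; ring
      _ ≤ h (a * x + b * y) * cst := mul_le_mul_left (hyp x y) _
  have core := PL1_core ha hb hab f' g' h'
    (hf.mul_const _) (hg.mul_const _) (hh.mul_const _) hf's hg's hyp'
  have hIf' : ∫⁻ x, f' x = (∫⁻ x, f x) * Mf⁻¹ := lintegral_mul_const _ hf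
  have hIg' : ∫⁻ x, g' x = (∫⁻ x, g x) * Mg⁻¹ := lintegral_mul_const _ hg
  have hIh' : ∫⁻ x, h' x = (∫⁻ x, h x) * cst := lintegral_mul_const _ hh
  rw [hIf', hIg', hIh'] at core
  have amgm := ennreal_gm_am ha hb hab ((∫⁻ x, f x) * Mf⁻¹) ((∫⁻ x, g x) * Mg⁻¹)
  have chain : ((∫⁻ x, f x) * Mf⁻¹) ^ a * ((∫⁻ x, g x) * Mg⁻¹) ^ b ≤ (∫⁻ x, h x) * cst :=
    le_trans amgm core
  rw [ENNReal.mul_rpow_of_ne_zero hIf0 hMfi0, ENNReal.mul_rpow_of_ne_zero hIg0 hMgi0] at chain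
  have : (∫⁻ x, f x) ^ a * (∫⁻ x, g x) ^ b * cst ≤ (∫⁻ x, h x) * cst := by
    calc (∫⁻ x, f x) ^ a * (∫⁻ x, g x) ^ b * cst
        = (∫⁻ x, f x) ^ a * Mf⁻¹ ^ a * ((∫⁻ x, g x) ^ b * Mg⁻¹ ^ b) := by rw [hcst]; ring
      _ ≤ (∫⁻ x, h x) * cst := chain
  exact (ENNReal.mul_le_mul_iff_left hcst0 hcstt).1 this

/-- 1-d Prékopa–Leindler. -/
lemma PL1 {a b : ℝ} (ha : 0 < a) (hb : 0 < b) (hab : a + b = 1)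
    (f g h : ℝ → ℝ≥0∞) (hf : Measurable f) (hg : Measurable g) (hh : Measurable h)
    (hyp : ∀ x y, f x ^ a * g y ^ b ≤ h (a * x + b * y)) :
    (∫⁻ x, f x) ^ a * (∫⁻ x, g x) ^ b ≤ ∫⁻ x, h x := by
  set fk : ℕ → ℝ → ℝ≥0∞ := fun k x => min (f x) k with hfk
  set gk : ℕ → ℝ → ℝ≥0∞ := fun k x => min (g x) k with hgk
  have hfkm : ∀ k, Measurable (fk k) := fun k => hf.min measurable_const
  have hgkm : ∀ k, Measurable (gk k) := fun k => hg.min measurable_const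
  have hfkmono : Monotone fk := fun k l hkl x => le_min (min_le_left _ _)
    (le_trans (min_le_right _ _) (by exact_mod_cast Nat.cast_le.2 hkl))
  have hgkmono : Monotone gk := fun k l hkl x => le_min (min_le_left _ _)
    (le_trans (min_le_right _ _) (by exact_mod_cast Nat.cast_le.2 hkl))
  have hsupmin : ∀ z : ℝ≥0∞, (⨆ k : ℕ, min z k) = z := by
    intro z
    apply le_antisymm (iSup_le fun k => min_le_left _ _)
    rcases eq_or_ne z ⊤ with hz | hz
    · calc z = ⨆ k : ℕ, (k : ℝ≥0∞) := by rw [ENNReal.iSup_natCast, hz]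
        _ ≤ ⨆ k : ℕ, min z k := iSup_mono fun k => le_min (hz ▸ le_top) le_rfl
    · obtain ⟨k, hk⟩ := ENNReal.exists_nat_gt hz
      calc z = min z k := (min_eq_left hk.le).symm
        _ ≤ ⨆ k : ℕ, min z k := le_iSup (fun k : ℕ => min z (k : ℝ≥0∞)) k
  have hIf : ∫⁻ x, f x = ⨆ k, ∫⁻ x, fk k x := by
    rw [← lintegral_iSup hfkm hfkmono]
    exact lintegral_congr fun x => (hsupmin (f x)).symm
  have hIg : ∫⁻ x, g x = ⨆ k, ∫⁻ x, gk k x := by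
    rw [← lintegral_iSup hgkm hgkmono]
    exact lintegral_congr fun x => (hsupmin (g x)).symm
  have hbdd : ∀ k : ℕ, (∫⁻ x, fk k x) ^ a * (∫⁻ x, gk k x) ^ b ≤ ∫⁻ x, h x := by
    intro k
    refine PL1_bdd ha hb hab (fk k) (gk k) h (hfkm k) (hgkm k) hh (k : ℝ≥0∞) (by simp)
      (fun x => min_le_right _ _) (fun x => min_le_right _ _) ?_
    intro x y
    refine le_trans ?_ (hyp x y)
    exact mul_le_mul' (ENNReal.rpow_le_rpow (min_le_left _ _) ha.le)
      (ENNReal.rpow_le_rpow (min_le_left _ _) hb.le)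
  rw [hIf, hIg, my_iSup_rpow a ha, my_iSup_rpow b hb, ENNReal.iSup_mul]
  refine iSup_le fun k => ?_
  rw [ENNReal.mul_iSup]
  refine iSup_le fun l => ?_
  have hkl : (∫⁻ x, fk k x) ^ a * (∫⁻ x, gk l x) ^ b
      ≤ (∫⁻ x, fk (max k l) x) ^ a * (∫⁻ x, gk (max k l) x) ^ b := by
    exact mul_le_mul'
      (ENNReal.rpow_le_rpow (lintegral_mono (hfkmono (le_max_left k l))) ha.le)
      (ENNReal.rpow_le_rpow (lintegral_mono (hgkmono (le_max_right k l))) hb.le)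
  exact le_trans hkl (hbdd (max k l))

/-- The Prékopa–Leindler property for a measure on a real vector space. -/
def PLProp (E : Type*) [MeasurableSpace E] [AddCommGroup E] [Module ℝ E]
    (μ : Measure E) : Prop :=
  ∀ a b : ℝ, 0 < a → 0 < b → a + b = 1 →
    ∀ f g h : E → ℝ≥0∞, Measurable f → Measurable g → Measurable h →
      (∀ x y, f x ^ a * g y ^ b ≤ h (a • x + b • y)) →
      (∫⁻ x, f x ∂μ) ^ a * (∫⁻ x, g x ∂μ) ^ b ≤ ∫⁻ x, h x ∂μ

lemma plprop_real : PLProp ℝ volume := by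
  intro a b ha hb hab f g h hf hg hh hyp
  exact PL1 ha hb hab f g h hf hg hh fun x y => by simpa [smul_eq_mul] using hyp x y

lemma plprop_prod {E F : Type*} [MeasurableSpace E] [AddCommGroup E] [Module ℝ E]
    [MeasurableSpace F] [AddCommGroup F] [Module ℝ F]
    (μ : Measure E) (ν : Measure F) [SigmaFinite μ] [SigmaFinite ν]
    (hE : PLProp E μ) (hF : PLProp F ν) : PLProp (E × F) (μ.prod ν) := by
  intro a b ha hb hab f g h hf hg hh hyp
  set Fi : E → ℝ≥0∞ := fun s => ∫⁻ y, f (s, y) ∂ν with hFi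
  set Gi : E → ℝ≥0∞ := fun s => ∫⁻ y, g (s, y) ∂ν with hGi
  set Hi : E → ℝ≥0∞ := fun s => ∫⁻ y, h (s, y) ∂ν with hHi
  have hFim : Measurable Fi := Measurable.lintegral_prod_right (f := fun s y => f (s, y)) hf
  have hGim : Measurable Gi := Measurable.lintegral_prod_right (f := fun s y => g (s, y)) hg
  have hHim : Measurable Hi := Measurable.lintegral_prod_right (f := fun s y => h (s, y)) hh
  have key : ∀ s₁ s₂, Fi s₁ ^ a * Gi s₂ ^ b ≤ Hi (a • s₁ + b • s₂) := by
    intro s₁ s₂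
    refine hF a b ha hb hab (fun y => f (s₁, y)) (fun y => g (s₂, y))
      (fun y => h (a • s₁ + b • s₂, y))
      (hf.comp (measurable_prodMk_left)) (hg.comp (measurable_prodMk_left))
      (hh.comp (measurable_prodMk_left)) ?_
    intro y₁ y₂
    have := hyp (s₁, y₁) (s₂, y₂)
    simpa [Prod.smul_mk, Prod.mk_add_mk] using this
  have final := hE a b ha hb hab Fi Gi Hi hFim hGim hHim key
  rw [lintegral_prod f hf.aemeasurable, lintegral_prod g hg.aemeasurable,
    lintegral_prod h hh.aemeasurable]
  exact final

lemma plprop_transfer {E F : Type*} [MeasurableSpace E] [AddCommGroup E] [Module ℝ E]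
    [MeasurableSpace F] [AddCommGroup F] [Module ℝ F]
    (μ : Measure E) (ν : Measure F) (e : E ≃ᵐ F) (he : MeasurePreserving e μ ν)
    (hsmul : ∀ (a b : ℝ) (x y : E), e (a • x + b • y) = a • e x + b • e y)
    (hF : PLProp F ν) : PLProp E μ := by
  intro a b ha hb hab f g h hf hg hh hyp
  have hsymm : MeasurePreserving e.symm ν μ := he.symm e
  have hsmul' : ∀ (a b : ℝ) (u v : F), e.symm (a • u + b • v) = a • e.symm u + b • e.symm v := by
    intro a b u v
    apply e.injective
    rw [e.apply_symm_apply, hsmul, e.apply_symm_apply, e.apply_symm_apply]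
  have key := hF a b ha hb hab (f ∘ e.symm) (g ∘ e.symm) (h ∘ e.symm)
    (hf.comp e.symm.measurable) (hg.comp e.symm.measurable) (hh.comp e.symm.measurable)
    (fun u v => by
      simp only [Function.comp_apply, hsmul' a b u v]
      exact hyp (e.symm u) (e.symm v))
  simp only [Function.comp_apply] at key
  rwa [hsymm.lintegral_comp hf, hsymm.lintegral_comp hg, hsymm.lintegral_comp hh] at key


lemma plprop_pi : ∀ n : ℕ, PLProp (Fin n → ℝ) volume := by
  intro n
  induction n with
  | zero =>
    intro a b ha hb hab f g h hf hg hh hyp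
    have huniv : (volume : Measure (Fin 0 → ℝ)) Set.univ = 1 := by
      rw [volume_pi, Measure.pi_univ]
      simp
    have hint : ∀ F : (Fin 0 → ℝ) → ℝ≥0∞, ∫⁻ x, F x = F (fun i => i.elim0) := by
      intro F
      have : ∀ x : Fin 0 → ℝ, F x = F (fun i => i.elim0) := by
        intro x; congr; ext i; exact i.elim0
      rw [lintegral_congr this, lintegral_const, huniv, mul_one]
    rw [hint f, hint g, hint h]
    have := hyp (fun i => i.elim0) (fun i => i.elim0)
    refine le_trans this (le_of_eq ?_)
    congr 1
    ext i
    exact i.elim0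
  | succ n ih =>
    have e := MeasurableEquiv.piFinSuccAbove (fun _ : Fin (n+1) => ℝ) 0
    have he := measurePreserving_piFinSuccAbove (fun _ : Fin (n+1) => (volume : Measure ℝ)) 0
    refine plprop_transfer volume (volume.prod volume)
      (MeasurableEquiv.piFinSuccAbove (fun _ : Fin (n+1) => ℝ) 0) ?_ ?_
      (plprop_prod volume volume plprop_real (ih))
    · have : (volume : Measure (Fin (n+1) → ℝ)) = Measure.pi fun _ => volume := volume_pi
      have h2 : (volume : Measure (Fin n → ℝ)) = Measure.pi fun _ => volume := volume_pi
      rw [this, h2]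
      exact measurePreserving_piFinSuccAbove (fun _ : Fin (n+1) => (volume : Measure ℝ)) 0
    · intro a b x y
      rfl

lemma plprop_euclidean (n : ℕ) : PLProp (EuclideanSpace ℝ (Fin n)) volume := by
  refine plprop_transfer volume volume (MeasurableEquiv.toLp 2 (Fin n → ℝ)).symm
    (EuclideanSpace.volume_preserving_symm_measurableEquiv_toLp (Fin n)) ?_ (plprop_pi n)
  intro a b x y
  rfl


variable {n : ℕ}

lemma my_smul_set_add {E : Type*} [AddCommGroup E] [Module ℝ E] (c : ℝ) (A B : Set E) :
    c • (A + B) = c • A + c • B := by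
  ext z
  simp only [Set.mem_smul_set, Set.mem_add]
  constructor
  · rintro ⟨w, ⟨x, hx, y, hy, rfl⟩, rfl⟩
    exact ⟨c • x, ⟨x, hx, rfl⟩, c • y, ⟨y, hy, rfl⟩, (smul_add c x y).symm⟩
  · rintro ⟨-, ⟨x, hx, rfl⟩, -, ⟨y, hy, rfl⟩, rfl⟩
    exact ⟨x + y, ⟨x, hx, y, hy, rfl⟩, smul_add c x y⟩

lemma my_smul_smul_set {E : Type*} [AddCommGroup E] [Module ℝ E] (c d : ℝ) (A : Set E) :
    c • d • A = (c * d) • A := by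
  ext z
  simp only [Set.mem_smul_set]
  constructor
  · rintro ⟨-, ⟨x, hx, rfl⟩, rfl⟩
    exact ⟨x, hx, (smul_smul c d x).symm ▸ rfl⟩
  · rintro ⟨x, hx, rfl⟩
    exact ⟨d • x, ⟨x, hx, rfl⟩, (smul_smul c d x)⟩

/-- volume of scaled set in EuclideanSpace, positive scalar. -/
lemma vol_smul (c : ℝ) (hc : 0 < c) (S : Set (EuclideanSpace ℝ (Fin n))) :
    volume (c • S) = ENNReal.ofReal (c ^ n) * volume S := by
  rw [Measure.addHaar_smul]
  congr 2
  rw [finrank_euclideanSpace_fin, abs_of_pos (by positivity)]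

/-- Multiplicative Brunn–Minkowski from Prékopa–Leindler. -/
lemma bm_mult {a b : ℝ} (ha : 0 < a) (hb : 0 < b) (hab : a + b = 1)
    (A B : Set (EuclideanSpace ℝ (Fin n))) (hA : IsCompact A) (hB : IsCompact B) :
    (volume A) ^ a * (volume B) ^ b ≤ volume (a • A + b • B) := by
  set C := a • A + b • B with hC
  have hCc : IsCompact C := (hA.smul a).add (hB.smul b)
  have hAm : MeasurableSet A := hA.measurableSet
  have hBm : MeasurableSet B := hB.measurableSet
  have hCm : MeasurableSet C := hCc.measurableSet
  have key := plprop_euclidean n a b ha hb hab (A.indicator 1) (B.indicator 1) (C.indicator 1)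
    ((measurable_const (a := (1:ℝ≥0∞))).indicator hAm)
    ((measurable_const (a := (1:ℝ≥0∞))).indicator hBm)
    ((measurable_const (a := (1:ℝ≥0∞))).indicator hCm) ?_
  · rwa [lintegral_indicator_one hAm, lintegral_indicator_one hBm, lintegral_indicator_one hCm]
      at key
  · intro x y
    by_cases hx : x ∈ A
    · by_cases hy : y ∈ B
      · have hmem : a • x + b • y ∈ C := Set.add_mem_add ⟨x, hx, rfl⟩ ⟨y, hy, rfl⟩
        simp [Set.indicator_of_mem, hx, hy, hmem]
      · simp [Set.indicator_of_notMem, hy, ENNReal.zero_rpow_of_pos hb]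
    · simp [Set.indicator_of_notMem, hx, ENNReal.zero_rpow_of_pos ha]

/-- Additive Brunn–Minkowski (normalized 1/n power, real-valued). -/
lemma bm_add (hn : 0 < n) (A B : Set (EuclideanSpace ℝ (Fin n)))
    (hA : IsCompact A) (hB : IsCompact B) (hAne : A.Nonempty) (hBne : B.Nonempty) :
    (volume A).toReal ^ ((1:ℝ)/n) + (volume B).toReal ^ ((1:ℝ)/n)
      ≤ (volume (A + B)).toReal ^ ((1:ℝ)/n) := by
  have hABc : IsCompact (A + B) := hA.add hB
  have hfinAB : volume (A + B) ≠ ⊤ := hABc.measure_lt_top.ne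
  have hfinA : volume A ≠ ⊤ := hA.measure_lt_top.ne
  have hfinB : volume B ≠ ⊤ := hB.measure_lt_top.ne
  set α := (volume A).toReal with hα
  set β := (volume B).toReal with hβ
  have hα0 : 0 ≤ α := ENNReal.toReal_nonneg
  have hβ0 : 0 ≤ β := ENNReal.toReal_nonneg
  have hn' : (0:ℝ) < (1:ℝ)/n := by positivity
  -- helper : translation monotonicity
  have mono : ∀ (S T : Set (EuclideanSpace ℝ (Fin n))), S.Nonempty →
      volume T ≤ volume (S + T) := by
    intro S T hSne
    obtain ⟨x₀, hx₀⟩ := hSne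
    have : (fun t => x₀ + t) '' T ⊆ S + T := by
      rintro - ⟨t, ht, rfl⟩; exact Set.add_mem_add hx₀ ht
    calc volume T = volume ((fun t => x₀ + t) '' T) := by
          rw [Set.image_add_left, measure_preimage_add]
      _ ≤ volume (S + T) := measure_mono this
  rcases eq_or_lt_of_le hα0 with hα0' | hαpos
  · have h1 : volume B ≤ volume (A + B) := mono A B hAne
    have h2 : β ≤ (volume (A + B)).toReal := ENNReal.toReal_mono hfinAB h1
    rw [← hα0', Real.zero_rpow (ne_of_gt hn'), zero_add]
    exact Real.rpow_le_rpow hβ0 h2 hn'.le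
  rcases eq_or_lt_of_le hβ0 with hβ0' | hβpos
  · have h1 : volume A ≤ volume (A + B) := by
      rw [add_comm A B]; exact mono B A hBne
    have h2 : α ≤ (volume (A + B)).toReal := ENNReal.toReal_mono hfinAB h1
    rw [← hβ0', Real.zero_rpow (ne_of_gt hn'), add_zero]
    exact Real.rpow_le_rpow hα0 h2 hn'.le
  -- main case
  set sa := α ^ ((1:ℝ)/n) with hsa
  set sb := β ^ ((1:ℝ)/n) with hsb
  have hsa0 : 0 < sa := Real.rpow_pos_of_pos hαpos _
  have hsb0 : 0 < sb := Real.rpow_pos_of_pos hβpos _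
  set s := sa + sb with hs
  have hs0 : 0 < s := by positivity
  have hsan : sa ^ n = α := by
    rw [hsa, ← Real.rpow_natCast (α ^ ((1:ℝ)/n)) n, ← Real.rpow_mul hα0]
    rw [one_div, inv_mul_cancel₀ (by exact_mod_cast hn.ne' : (n:ℝ) ≠ 0), Real.rpow_one]
  have hsbn : sb ^ n = β := by
    rw [hsb, ← Real.rpow_natCast (β ^ ((1:ℝ)/n)) n, ← Real.rpow_mul hβ0]
    rw [one_div, inv_mul_cancel₀ (by exact_mod_cast hn.ne' : (n:ℝ) ≠ 0), Real.rpow_one]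
  set A' := sa⁻¹ • A with hA'
  set B' := sb⁻¹ • B with hB'
  have hvolA : volume A = ENNReal.ofReal α := (ENNReal.ofReal_toReal hfinA).symm
  have hvolB : volume B = ENNReal.ofReal β := (ENNReal.ofReal_toReal hfinB).symm
  have hvolA' : volume A' = 1 := by
    rw [hA', vol_smul _ (by positivity), hvolA, ← ENNReal.ofReal_mul (by positivity)]
    rw [inv_pow, hsan, inv_mul_cancel₀ (ne_of_gt hαpos)]
    exact ENNReal.ofReal_one
  have hvolB' : volume B' = 1 := by
    rw [hB', vol_smul _ (by positivity), hvolB, ← ENNReal.ofReal_mul (by positivity)]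
    rw [inv_pow, hsbn, inv_mul_cancel₀ (ne_of_gt hβpos)]
    exact ENNReal.ofReal_one
  have hmult := bm_mult (a := sa/s) (b := sb/s) (by positivity) (by positivity)
    (by field_simp; rw [hs]) A' B' (hA.smul _) (hB.smul _)
  rw [hvolA', hvolB', ENNReal.one_rpow, ENNReal.one_rpow, one_mul] at hmult
  have hsets : (sa/s) • A' + (sb/s) • B' = s⁻¹ • (A + B) := by
    rw [hA', hB', my_smul_smul_set, my_smul_smul_set, my_smul_set_add]
    congr 2 <;> field_simp
  rw [hsets, vol_smul _ (by positivity)] at hmult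
  -- 1 ≤ ofReal (s⁻¹ ^ n) * volume (A + B)
  have hkey : ENNReal.ofReal (s ^ n) ≤ volume (A + B) := by
    have h2 := mul_le_mul_right hmult (ENNReal.ofReal (s ^ n))
    rw [mul_one, ← mul_assoc, ← ENNReal.ofReal_mul (by positivity)] at h2
    rw [show s ^ n * s⁻¹ ^ n = 1 by rw [← mul_pow]; simp [mul_inv_cancel₀ (ne_of_gt hs0)],
      ENNReal.ofReal_one, one_mul] at h2
    exact h2
  have hfin : s ^ n ≤ (volume (A + B)).toReal := by
    have := ENNReal.toReal_mono hfinAB hkey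
    rwa [ENNReal.toReal_ofReal (by positivity)] at this
  calc sa + sb = (s ^ n) ^ ((1:ℝ)/n) := by
        rw [← Real.rpow_natCast s n, ← Real.rpow_mul hs0.le]
        rw [mul_one_div, div_self (by exact_mod_cast hn.ne' : (n:ℝ) ≠ 0), Real.rpow_one]
    _ ≤ (volume (A + B)).toReal ^ ((1:ℝ)/n) := Real.rpow_le_rpow (by positivity) hfin hn'.le

variable {n : ℕ}


/-- compactness & nonemptiness of finset Minkowski sums -/
lemma finset_sum_compact {ι : Type*} (s : Finset ι) (K : ι → Set (EuclideanSpace ℝ (Fin n)))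
    (hc : ∀ i, IsCompact (K i)) (hne : ∀ i, (K i).Nonempty) :
    IsCompact (∑ i ∈ s, K i) ∧ (∑ i ∈ s, K i).Nonempty := by
  classical
  induction s using Finset.induction_on with
  | empty =>
    constructor
    · show IsCompact (0 : Set (EuclideanSpace ℝ (Fin n)))
      rw [show (0 : Set (EuclideanSpace ℝ (Fin n))) = {0} from rfl]
      exact isCompact_singleton
    · exact ⟨0, rfl⟩
  | insert _ _ hx ih =>
    rename_i a t
    rw [Finset.sum_insert hx]
    exact ⟨(hc a).add ih.1, Set.add_nonempty.2 ⟨hne a, ih.2⟩⟩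

/-- superadditivity of the 1/n-th power volume over finset Minkowski sums -/
lemma finset_sum_bm (hn : 0 < n) {ι : Type*} (s : Finset ι) (hs : s.Nonempty)
    (K : ι → Set (EuclideanSpace ℝ (Fin n)))
    (hc : ∀ i, IsCompact (K i)) (hne : ∀ i, (K i).Nonempty) :
    ∑ i ∈ s, (volume (K i)).toReal ^ ((1:ℝ)/n)
      ≤ (volume (∑ i ∈ s, K i)).toReal ^ ((1:ℝ)/n) := by
  classical
  induction s using Finset.induction_on with
  | empty => simp at hs
  | insert _ _ hx ih =>
    rename_i a t
    rw [Finset.sum_insert hx, Finset.sum_insert hx]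
    rcases t.eq_empty_or_nonempty with rfl | htne
    · simp
    · calc (volume (K a)).toReal ^ ((1:ℝ)/n) + ∑ i ∈ t, (volume (K i)).toReal ^ ((1:ℝ)/n)
          ≤ (volume (K a)).toReal ^ ((1:ℝ)/n) + (volume (∑ i ∈ t, K i)).toReal ^ ((1:ℝ)/n) := by
            gcongr
            exact ih htne
        _ ≤ (volume (K a + ∑ i ∈ t, K i)).toReal ^ ((1:ℝ)/n) := by
            obtain ⟨htc, htne'⟩ := finset_sum_compact t K hc hne
            exact bm_add hn _ _ (hc a) htc (hne a) htne'

lemma smul_finset_sum {ι : Type*} (c : ℝ) (s : Finset ι) (K : ι → Set (EuclideanSpace ℝ (Fin n))) :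
    c • (∑ i ∈ s, K i) = ∑ i ∈ s, c • K i := by
  classical
  induction s using Finset.induction_on with
  | empty => simp [Set.smul_set_singleton]
  | insert _ _ hx ih =>
    rename_i a t
    rw [Finset.sum_insert hx, Finset.sum_insert hx, my_smul_set_add, ih]

/-- `m • s = (m : ℝ) • s` for convex nonempty `s`, `1 ≤ m`. -/
lemma nsmul_eq_smul_of_convex {F : Type*} [AddCommGroup F] [Module ℝ F]
    {s : Set F} (hs : Convex ℝ s) (m : ℕ) (hm : 1 ≤ m) :
    m • s = ((m : ℝ)) • s := by
  induction m with
  | zero => omega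
  | succ k ih =>
    rcases Nat.eq_or_lt_of_le hm with h1 | h2
    · rw [← h1]
      simp [one_smul]
    · have hk : 1 ≤ k := by omega
      rw [succ_nsmul, ih hk, Nat.cast_succ, hs.add_smul (by positivity) zero_le_one, one_smul]

lemma V_smul {n : ℕ} (hn : 0 < n) (c : ℝ) (hc : 0 < c) (S : Set (EuclideanSpace ℝ (Fin n))) :
    (volume (c • S)).toReal ^ ((1:ℝ)/n) = c * (volume S).toReal ^ ((1:ℝ)/n) := by
  rw [vol_smul c hc, ENNReal.toReal_mul, ENNReal.toReal_ofReal (by positivity),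
    Real.mul_rpow (by positivity) ENNReal.toReal_nonneg]
  congr 1
  rw [← Real.rpow_natCast c n, ← Real.rpow_mul hc.le, mul_one_div,
    div_self (by exact_mod_cast hn.ne' : (n:ℝ) ≠ 0), Real.rpow_one]

/-- Normalized leave-one-out Brunn–Minkowski inequality:
`|(K 1 + ⋯ + K M)/M|^{1/n} ≥ (1/M) ∑ i, |(∑ {j ≠ i}, K j)/(M-1)|^{1/n}` for `M ≥ 2`. -/
theorem normalized_leave_one_out_brunn_minkowski (n M : ℕ) (hn : 0 < n) (hM : 2 ≤ M)
    (K : Fin M → Set (EuclideanSpace ℝ (Fin n)))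
    (hKcv : ∀ j, Convex ℝ (K j)) (hKcp : ∀ j, IsCompact (K j))
    (hKne : ∀ j, (K j).Nonempty) :
    (1 / (M : ℝ)) *
        ∑ i, (volume ((M - 1 : ℝ)⁻¹ • ∑ j ∈ Finset.univ.erase i, K j)).toReal
              ^ ((1 : ℝ) / n)
      ≤ (volume ((M : ℝ)⁻¹ • ∑ j, K j)).toReal ^ ((1 : ℝ) / n) := by
  classical
  haveI : Nonempty (Fin M) := ⟨⟨0, by omega⟩⟩
  set V : Set (EuclideanSpace ℝ (Fin n)) → ℝ := fun S => (volume S).toReal ^ ((1:ℝ)/n) with hV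
  set S : Set (EuclideanSpace ℝ (Fin n)) := ∑ j, K j with hS
  set Si : Fin M → Set (EuclideanSpace ℝ (Fin n)) := fun i => ∑ j ∈ Finset.univ.erase i, K j
    with hSi
  have hM1 : (0:ℝ) < (M:ℝ) - 1 := by
    have : (2:ℝ) ≤ (M:ℝ) := by exact_mod_cast hM
    linarith
  have hMpos : (0:ℝ) < (M:ℝ) := by linarith
  have hSic : ∀ i, IsCompact (Si i) := fun i =>
    (finset_sum_compact _ K hKcp hKne).1
  have hSine : ∀ i, (Si i).Nonempty := fun i =>
    (finset_sum_compact _ K hKcp hKne).2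
  -- the key set identity : ∑ i, Si i = ((M:ℝ) - 1) • S
  have identity : (∑ i, Si i) = ((M:ℝ) - 1) • S := by
    have swap : (∑ i, Si i) = ∑ j, ∑ _i ∈ Finset.univ.erase j, K j := by
      refine Finset.sum_comm' ?_
      intro i j
      simp only [Finset.mem_univ, Finset.mem_erase, true_and, and_true]
      exact ⟨Ne.symm, Ne.symm⟩
    rw [swap]
    have inner : ∀ j : Fin M, ∑ _i ∈ Finset.univ.erase j, K j = ((M:ℝ) - 1) • K j := by
      intro j
      rw [Finset.sum_const, Finset.card_erase_of_mem (Finset.mem_univ j), Finset.card_univ,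
        Fintype.card_fin, nsmul_eq_smul_of_convex (hKcv j) (M - 1) (by omega)]
      congr 1
      have : ((M - 1 : ℕ) : ℝ) = (M:ℝ) - 1 := by
        rw [Nat.cast_sub (by omega)]; simp
      rw [this]
    rw [Finset.sum_congr rfl (fun j _ => inner j), ← smul_finset_sum]
  -- main chain
  have chain : ∑ i, V (Si i) ≤ ((M:ℝ) - 1) * V S := by
    calc ∑ i, V (Si i) ≤ V (∑ i, Si i) :=
          finset_sum_bm hn Finset.univ Finset.univ_nonempty Si hSic hSine
      _ = V (((M:ℝ) - 1) • S) := by rw [identity]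
      _ = ((M:ℝ) - 1) * V S := V_smul hn _ hM1 S
  have lhs_eq : (1 / (M : ℝ)) * ∑ i, (volume (((M:ℝ) - 1)⁻¹ • Si i)).toReal ^ ((1:ℝ)/n)
      = (1 / ((M:ℝ) * ((M:ℝ) - 1))) * ∑ i, V (Si i) := by
    have : ∀ i : Fin M, (volume (((M:ℝ) - 1)⁻¹ • Si i)).toReal ^ ((1:ℝ)/n)
        = ((M:ℝ) - 1)⁻¹ * V (Si i) := fun i => V_smul hn _ (by positivity) (Si i)
    rw [Finset.sum_congr rfl (fun i _ => this i), ← Finset.mul_sum, ← mul_assoc]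
    congr 1
    field_simp
  have rhs_eq : (volume ((M : ℝ)⁻¹ • S)).toReal ^ ((1:ℝ)/n) = (M:ℝ)⁻¹ * V S :=
    V_smul hn _ (by positivity) S
  calc (1 / (M : ℝ)) * ∑ i, (volume (((M:ℝ) - 1)⁻¹ • Si i)).toReal ^ ((1:ℝ)/n)
      = (1 / ((M:ℝ) * ((M:ℝ) - 1))) * ∑ i, V (Si i) := lhs_eq
    _ ≤ (1 / ((M:ℝ) * ((M:ℝ) - 1))) * (((M:ℝ) - 1) * V S) := by
        apply mul_le_mul_of_nonneg_left chain (by positivity)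
    _ = (M:ℝ)⁻¹ * V S := by
        rw [← mul_assoc]
        congr 1
        field_simp
    _ = (volume ((M : ℝ)⁻¹ • S)).toReal ^ ((1:ℝ)/n) := rhs_eq.symm
end

section
/- Fractional Ehrhard inequality: let $K_1, \ldots, K_M$ be convex subsets of $\mathbb{R}^n$ of positive Lebesgue measure, $\beta$ a fractional partition of $[M]$ using $\mathcal{S}$, and $\lambda_1, \ldots, \lambda_M \ge 0$ with $\sum_j \lambda_j = 1$. Assuming the Ehrhard-Borell inequality $\Phi^{-1}(\gamma(\lambda A + (1-\lambda)B)) \ge \lambda \Phi^{-1}(\gamma(A)) + (1-\lambda)\Phi^{-1}(\gamma(B))$ for Borel sets of positive volume, one has $\Phi^{-1}(\gamma(\sum_{j} \lambda_j K_j)) \ge \sum_{\mathbf{s} \in \mathcal{S}} \beta_{\mathbf{s}} \lambda_{\mathbf{s}} \, \Phi^{-1}(\gamma(\sum_{j \in \mathbf{s}} \frac{\lambda_j}{\lambda_{\mathbf{s}}} K_j))$, where $\lambda_{\mathbf{s}} = \sum_{i \in \mathbf{s}} \lambda_i$ (assumed positive for each $\mathbf{s}$). -/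
open Pointwise MeasureTheory ProbabilityTheory

/-- The standard Gaussian measure on `ℝⁿ`. -/
noncomputable def stdGaussian (n : ℕ) : Measure (Fin n → ℝ) :=
  Measure.pi fun _ => gaussianReal 0 1

/-- The standard normal cumulative distribution function. -/
noncomputable def stdNormalCDF (x : ℝ) : ℝ := (gaussianReal 0 1 (Set.Iic x)).toReal

/-- The inverse of the standard normal CDF. -/
noncomputable def stdNormalCDFInv : ℝ → ℝ := Function.invFun stdNormalCDF

section Aux

open Set Filter Topology

set_option linter.unusedSectionVars false

/-- Absolute continuity of finite products of measures on `ℝ`. -/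
lemma pi_ac : ∀ {m : ℕ} (μ ν : Fin m → Measure ℝ), (∀ i, SigmaFinite (μ i)) →
    (∀ i, SigmaFinite (ν i)) → (∀ i, μ i ≪ ν i) → Measure.pi μ ≪ Measure.pi ν := by
  intro m
  induction m with
  | zero =>
    intro μ ν _ _ _ s hs
    rcases Set.eq_empty_or_nonempty s with rfl | ⟨a, ha⟩
    · simp
    · exfalso
      have hsu : s = Set.univ := by
        ext x; simp only [Set.mem_univ, iff_true]
        have : x = a := Subsingleton.elim x a
        rwa [this]
      rw [hsu, Measure.pi_univ] at hs
      simp at hs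
  | succ m ih =>
    intro μ ν hμs hνs h
    haveI := hμs; haveI := hνs
    set e := MeasurableEquiv.piFinSuccAbove (fun _ : Fin (m+1) => ℝ) 0 with he
    have key : ∀ (κ : Fin (m+1) → Measure ℝ), (∀ i, SigmaFinite (κ i)) →
        ∀ s : Set (Fin (m+1) → ℝ),
        Measure.pi κ s
          = ((κ 0).prod (Measure.pi fun j => κ ((0 : Fin (m+1)).succAbove j))) (e '' s) := by
      intro κ hκ s
      haveI := hκ
      have hmp := measurePreserving_piFinSuccAbove κ 0
      rw [← hmp.map_eq, MeasurableEquiv.map_apply, Set.preimage_image_eq s e.injective]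
    intro s hs
    rw [key ν hνs] at hs
    rw [key μ hμs]
    exact Measure.AbsolutelyContinuous.prod (h 0)
      (ih _ _ (fun j => hμs _) (fun j => hνs _) (fun j => h _)) hs

/-- The standard Gaussian is absolutely continuous w.r.t. Lebesgue measure. -/
lemma stdGaussian_ac {n : ℕ} : stdGaussian n ≪ (volume : Measure (Fin n → ℝ)) := by
  rw [_root_.stdGaussian, show (volume : Measure (Fin n → ℝ)) = Measure.pi fun _ => (volume : Measure ℝ)
    from MeasureTheory.volume_pi]
  exact pi_ac _ _ (fun _ => inferInstance) (fun _ => inferInstance)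
    (fun _ => gaussianReal_absolutelyContinuous 0 one_ne_zero)

variable {E : Type*} [NormedAddCommGroup E] [NormedSpace ℝ E]
variable {ι : Type*} [DecidableEq ι]

lemma sum_subset_sum (T : Finset ι) (f g : ι → Set E) (h : ∀ t ∈ T, f t ⊆ g t) :
    ∑ t ∈ T, f t ⊆ ∑ t ∈ T, g t := by
  classical
  induction T using Finset.induction_on with
  | empty => simp
  | @insert a s ha ih =>
    rw [Finset.sum_insert ha, Finset.sum_insert ha]
    exact Set.add_subset_add (h a (Finset.mem_insert_self _ _))
      (ih fun t ht => h t (Finset.mem_insert_of_mem ht))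

lemma sum_closure_subset (T : Finset ι) (f : ι → Set E) :
    ∑ t ∈ T, closure (f t) ⊆ closure (∑ t ∈ T, f t) := by
  classical
  induction T using Finset.induction_on with
  | empty => simp [subset_closure]
  | @insert a s ha ih =>
    rw [Finset.sum_insert ha, Finset.sum_insert ha]
    intro z hz
    obtain ⟨x, hx, y, hy, rfl⟩ := Set.mem_add.1 hz
    exact map_mem_closure₂ continuous_add hx (ih hy)
      (fun u hu v hv => Set.add_mem_add hu hv)

lemma sum_nonempty (T : Finset ι) (f : ι → Set E) (h : ∀ t ∈ T, (f t).Nonempty) :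
    (∑ t ∈ T, f t).Nonempty := by
  classical
  induction T using Finset.induction_on with
  | empty => exact ⟨0, by simp⟩
  | @insert a s ha ih =>
    rw [Finset.sum_insert ha]
    exact (h a (Finset.mem_insert_self _ _)).add (ih fun t ht => h t (Finset.mem_insert_of_mem ht))

lemma sum_convex (T : Finset ι) (f : ι → Set E) (h : ∀ t ∈ T, Convex ℝ (f t)) :
    Convex ℝ (∑ t ∈ T, f t) := by
  classical
  induction T using Finset.induction_on with
  | empty => rw [Finset.sum_empty]; exact convex_singleton (𝕜 := ℝ) (0 : E)
  | @insert a s ha ih =>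
    rw [Finset.sum_insert ha]
    exact (h a (Finset.mem_insert_self _ _)).add (ih fun t ht => h t (Finset.mem_insert_of_mem ht))

lemma sum_open (T : Finset ι) (f : ι → Set E) {t0 : ι} (ht0 : t0 ∈ T) (h : IsOpen (f t0)) :
    IsOpen (∑ t ∈ T, f t) := by
  rw [← Finset.add_sum_erase _ f ht0]
  exact h.add_right

lemma convex_collapse (T : Finset ι) (c : ι → ℝ) (C : Set E) (hC : Convex ℝ C)
    (hne : C.Nonempty) (h : ∀ t ∈ T, 0 ≤ c t) :
    (∑ t ∈ T, c t) • C = ∑ t ∈ T, (c t) • C := by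
  classical
  induction T using Finset.induction_on with
  | empty => simpa using Set.zero_smul_set hne
  | @insert a s ha ih =>
    rw [Finset.sum_insert ha, Finset.sum_insert ha,
      hC.add_smul (h a (Finset.mem_insert_self _ _))
        (Finset.sum_nonneg fun t ht => h t (Finset.mem_insert_of_mem ht)),
      ih fun t ht => h t (Finset.mem_insert_of_mem ht)]

lemma subset_closure_interior {s : Set E} (hs : Convex ℝ s) (hne : (interior s).Nonempty) :
    s ⊆ closure (interior s) := by
  intro x hx
  obtain ⟨y, hy⟩ := hne
  have htend : Tendsto (fun k : ℕ => x + (1 / (k + 1 : ℝ)) • (y - x)) atTop (𝓝 x) := by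
    have h0 : Tendsto (fun k : ℕ => (1 / (k + 1 : ℝ)) • (y - x)) atTop (𝓝 ((0:ℝ) • (y - x))) :=
      tendsto_one_div_add_atTop_nhds_zero_nat.smul_const (y - x)
    simpa using tendsto_const_nhds.add h0
  refine mem_closure_of_tendsto htend (Filter.Eventually.of_forall fun k => ?_)
  refine hs.add_smul_sub_mem_interior hx hy ⟨by positivity, ?_⟩
  rw [div_le_one (by positivity)]
  linarith [Nat.cast_nonneg (α := ℝ) k]

/-- Double-sum exchange along a filter. -/
lemma sum_swap_filter {N : Type*} [AddCommMonoid N] {M : ℕ} (S : Finset (Finset (Fin M)))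
    (F : Finset (Fin M) → Fin M → N) :
    ∑ s ∈ S, ∑ j ∈ s, F s j
      = ∑ j : Fin M, ∑ s ∈ S.filter (fun s => j ∈ s), F s j := by
  classical
  have h1 : ∀ s ∈ S, ∑ j ∈ s, F s j = ∑ j : Fin M, if j ∈ s then F s j else 0 := by
    intro s _
    rw [← Finset.sum_filter]
    congr 1
    ext j
    simp
  rw [Finset.sum_congr rfl h1, Finset.sum_comm]
  refine Finset.sum_congr rfl fun j _ => ?_
  rw [Finset.sum_filter]

/-- A convex set of positive volume has an interior of positive volume. -/
lemma interior_volume_pos {n : ℕ} {K : Set (Fin n → ℝ)} (hK : Convex ℝ K)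
    (hvol : 0 < volume K) : 0 < volume (interior K) := by
  have h1 : volume K ≤ volume (K ∩ frontier K) + volume (K \ frontier K) :=
    measure_le_inter_add_diff _ _ _
  have h2 : volume (K ∩ frontier K) = 0 :=
    measure_mono_null Set.inter_subset_right (hK.addHaar_frontier volume)
  have h3 : K \ frontier K ⊆ interior K := by
    rw [self_diff_frontier]
  have h4 : volume K ≤ volume (interior K) := by
    rw [h2, zero_add] at h1
    exact h1.trans (measure_mono h3)
  exact lt_of_lt_of_le hvol h4

/-- Two sets squeezed between a convex set and its closure have the same Gaussian measure. -/
lemma gauss_eq_of_sandwich {n : ℕ} {Y X : Set (Fin n → ℝ)} (hY : Convex ℝ Y)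
    (hYX : Y ⊆ X) (hXc : X ⊆ closure Y) : stdGaussian n X = stdGaussian n Y := by
  have hfr : stdGaussian n (frontier Y) = 0 :=
    stdGaussian_ac (hY.addHaar_frontier volume)
  refine le_antisymm ?_ (measure_mono hYX)
  calc stdGaussian n X ≤ stdGaussian n (closure Y) := measure_mono hXc
    _ ≤ stdGaussian n (Y ∪ frontier Y) := by
        refine measure_mono fun x hx => ?_
        rcases Classical.em (x ∈ Y) with h | h
        · exact Or.inl h
        · exact Or.inr ⟨hx, fun hi => h (interior_subset hi)⟩
    _ ≤ stdGaussian n Y + stdGaussian n (frontier Y) := measure_union_le _ _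
    _ = stdGaussian n Y := by rw [hfr, add_zero]

/-- Iterated Ehrhard inequality for finitely many open nonempty sets. -/
lemma multi_ehrhard (n : ℕ)
    (hEhrhard : ∀ (A B : Set (Fin n → ℝ)), MeasurableSet A → MeasurableSet B →
      0 < volume A → 0 < volume B → ∀ lam : ℝ, 0 ≤ lam → lam ≤ 1 →
      lam * stdNormalCDFInv ((stdGaussian n A).toReal)
          + (1 - lam) * stdNormalCDFInv ((stdGaussian n B).toReal)
        ≤ stdNormalCDFInv ((stdGaussian n (lam • A + (1 - lam) • B)).toReal))
    (T : Finset ι) (A : ι → Set (Fin n → ℝ))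
    (hO : ∀ t ∈ T, IsOpen (A t)) (hne : ∀ t ∈ T, (A t).Nonempty) :
    ∀ (w : ι → ℝ), (∀ t ∈ T, 0 ≤ w t) → ∑ t ∈ T, w t = 1 →
    ∑ t ∈ T, w t * stdNormalCDFInv ((stdGaussian n (A t)).toReal)
      ≤ stdNormalCDFInv ((stdGaussian n (∑ t ∈ T, w t • A t)).toReal) := by
  classical
  induction T using Finset.induction_on with
  | empty => intro w _ hw1; simp at hw1
  | @insert a s ha ih =>
    intro w hw hw1
    have hOa : IsOpen (A a) := hO a (Finset.mem_insert_self _ _)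
    have hnea : (A a).Nonempty := hne a (Finset.mem_insert_self _ _)
    have hOs : ∀ t ∈ s, IsOpen (A t) := fun t ht => hO t (Finset.mem_insert_of_mem ht)
    have hnes : ∀ t ∈ s, (A t).Nonempty := fun t ht => hne t (Finset.mem_insert_of_mem ht)
    set r := ∑ t ∈ s, w t with hr
    have hwa : 0 ≤ w a := hw a (Finset.mem_insert_self _ _)
    have hws : ∀ t ∈ s, 0 ≤ w t := fun t ht => hw t (Finset.mem_insert_of_mem ht)
    have hr0 : 0 ≤ r := Finset.sum_nonneg hws
    have hsum : w a + r = 1 := by rwa [Finset.sum_insert ha] at hw1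
    rcases eq_or_lt_of_le hr0 with hrz | hrpos
    · -- r = 0
      have hz : ∀ t ∈ s, w t = 0 :=
        (Finset.sum_eq_zero_iff_of_nonneg hws).1 hrz.symm
      have hwa1 : w a = 1 := by rw [← hsum, ← hrz]; ring
      have hL : ∑ t ∈ insert a s, w t * stdNormalCDFInv ((stdGaussian n (A t)).toReal)
          = stdNormalCDFInv ((stdGaussian n (A a)).toReal) := by
        rw [Finset.sum_insert ha, hwa1, one_mul,
          Finset.sum_eq_zero fun t ht => by rw [hz t ht, zero_mul], add_zero]
      have hR : ∑ t ∈ insert a s, w t • A t = A a := by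
        rw [Finset.sum_insert ha, hwa1, one_smul,
          Finset.sum_eq_zero fun t ht => by rw [hz t ht, Set.zero_smul_set (hnes t ht)],
          add_zero]
      rw [hL, hR]
    · -- r > 0
      set B := ∑ t ∈ s, (w t / r) • A t with hB
      obtain ⟨t0, ht0, hwt0⟩ : ∃ t0 ∈ s, 0 < w t0 := by
        by_contra hcon
        push_neg at hcon
        have : r = 0 := le_antisymm (Finset.sum_nonpos hcon) hr0
        exact absurd this (ne_of_gt hrpos)
      have hBopen : IsOpen B :=
        sum_open s _ ht0 ((hOs t0 ht0).smul₀ (by positivity))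
      have hBne : B.Nonempty :=
        sum_nonempty s _ fun t ht => (hnes t ht).smul_set
      have ihs : ∑ t ∈ s, (w t / r) * stdNormalCDFInv ((stdGaussian n (A t)).toReal)
          ≤ stdNormalCDFInv ((stdGaussian n B).toReal) := by
        refine ih hOs hnes _ (fun t ht => div_nonneg (hws t ht) hr0) ?_
        rw [← Finset.sum_div, ← hr, div_self (ne_of_gt hrpos)]
      have key := hEhrhard (A a) B hOa.measurableSet hBopen.measurableSet
        (hOa.measure_pos volume hnea) (hBopen.measure_pos volume hBne)
        (w a) hwa (by linarith)
      have h1wa : 1 - w a = r := by linarith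
      rw [h1wa] at key
      have hrB : r • B = ∑ t ∈ s, w t • A t := by
        rw [hB, Finset.smul_sum]
        refine Finset.sum_congr rfl fun t ht => ?_
        rw [smul_smul, mul_div_cancel₀ _ (ne_of_gt hrpos)]
      rw [hrB] at key
      have hmul : r * ∑ t ∈ s, (w t / r) * stdNormalCDFInv ((stdGaussian n (A t)).toReal)
          = ∑ t ∈ s, w t * stdNormalCDFInv ((stdGaussian n (A t)).toReal) := by
        rw [Finset.mul_sum]
        refine Finset.sum_congr rfl fun t ht => ?_
        field_simp
      rw [Finset.sum_insert ha, Finset.sum_insert ha]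
      have step : ∑ t ∈ s, w t * stdNormalCDFInv ((stdGaussian n (A t)).toReal)
          ≤ r * stdNormalCDFInv ((stdGaussian n B).toReal) := by
        rw [← hmul]
        exact mul_le_mul_of_nonneg_left ihs hr0
      linarith

end Aux

/-- Fractional Ehrhard inequality: assuming the Ehrhard–Borell inequality for two Borel
sets of positive volume, for convex sets `K j` of positive volume, a fractional
partition `β` of `[M]` using `S`, and convex weights `λ j`,
`Φ⁻¹(γ(∑ j, λ j • K j)) ≥ ∑ s in S, β s * λ_s * Φ⁻¹(γ(∑ j in s, (λ j / λ_s) • K j))`. -/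
theorem fractional_ehrhard (n M : ℕ) (hn : 0 < n)
    (hEhrhard : ∀ (A B : Set (Fin n → ℝ)), MeasurableSet A → MeasurableSet B →
      0 < volume A → 0 < volume B → ∀ lam : ℝ, 0 ≤ lam → lam ≤ 1 →
      lam * stdNormalCDFInv ((stdGaussian n A).toReal)
          + (1 - lam) * stdNormalCDFInv ((stdGaussian n B).toReal)
        ≤ stdNormalCDFInv ((stdGaussian n (lam • A + (1 - lam) • B)).toReal))
    (K : Fin M → Set (Fin n → ℝ)) (hKcv : ∀ j, Convex ℝ (K j))
    (hKm : ∀ j, MeasurableSet (K j)) (hKvol : ∀ j, 0 < volume (K j))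
    (S : Finset (Finset (Fin M))) (β : Finset (Fin M) → ℝ)
    (hβ0 : ∀ s ∈ S, 0 ≤ β s) (hβ1 : ∀ s ∈ S, β s ≤ 1)
    (hpart : ∀ i : Fin M, ∑ s ∈ S.filter (fun s => i ∈ s), β s = 1)
    (lam : Fin M → ℝ) (hlam0 : ∀ j, 0 ≤ lam j) (hlam1 : ∑ j, lam j = 1)
    (hlamS : ∀ s ∈ S, 0 < ∑ i ∈ s, lam i) :
    ∑ s ∈ S, β s * (∑ i ∈ s, lam i) *
        stdNormalCDFInv
          ((stdGaussian n (∑ j ∈ s, (lam j / ∑ i ∈ s, lam i) • K j)).toReal)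
      ≤ stdNormalCDFInv ((stdGaussian n (∑ j, lam j • K j)).toReal) := by
  classical
  set Ki : Fin M → Set (Fin n → ℝ) := fun j => interior (K j) with hKi
  have hKiOpen : ∀ j, IsOpen (Ki j) := fun j => isOpen_interior
  have hKiConv : ∀ j, Convex ℝ (Ki j) := fun j => (hKcv j).interior
  have hKivol : ∀ j, 0 < volume (Ki j) := fun j => interior_volume_pos (hKcv j) (hKvol j)
  have hKine : ∀ j, (Ki j).Nonempty := fun j =>
    nonempty_of_measure_ne_zero (ne_of_gt (hKivol j))
  have hKsub : ∀ j, K j ⊆ closure (Ki j) := fun j =>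
    subset_closure_interior (hKcv j) (hKine j)
  set L : Finset (Fin M) → ℝ := fun s => ∑ i ∈ s, lam i with hL
  set U : Finset (Fin M) → Set (Fin n → ℝ) :=
    fun s => ∑ j ∈ s, (lam j / L s) • Ki j with hU
  set w : Finset (Fin M) → ℝ := fun s => β s * L s with hw
  -- sandwich lemma application, generic form
  have sandwich : ∀ (T : Finset (Fin M)) (c : Fin M → ℝ),
      stdGaussian n (∑ j ∈ T, c j • K j) = stdGaussian n (∑ j ∈ T, c j • Ki j) := by
    intro T c
    refine gauss_eq_of_sandwich (sum_convex _ _ fun j _ => (hKiConv j).smul _)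
      (sum_subset_sum _ _ _ fun j _ => Set.smul_set_mono interior_subset) ?_
    refine (sum_subset_sum T (fun j => c j • K j) (fun j => closure (c j • Ki j))
      fun j _ => ?_).trans (sum_closure_subset _ _)
    refine (Set.smul_set_mono (hKsub j)).trans ?_
    have := image_closure_subset_closure_image (f := fun x => c j • x) (s := Ki j)
      (continuous_const_smul _)
    simpa [Set.image_smul] using this
  -- step 1 : measure equality for each s
  have step1 : ∀ s ∈ S,
      stdGaussian n (∑ j ∈ s, (lam j / L s) • K j) = stdGaussian n (U s) :=
    fun s _ => sandwich s _
  -- weights sum to one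
  have hw1 : ∑ s ∈ S, w s = 1 := by
    have : ∀ s ∈ S, w s = ∑ j ∈ s, β s * lam j := by
      intro s _
      rw [hw]
      simp only
      rw [hL]
      simp only
      rw [Finset.mul_sum]
    rw [Finset.sum_congr rfl this, sum_swap_filter]
    have : ∀ j : Fin M, ∑ s ∈ S.filter (fun s => j ∈ s), β s * lam j = lam j := by
      intro j
      rw [← Finset.sum_mul, hpart j, one_mul]
    rw [Finset.sum_congr rfl fun j _ => this j]
    exact hlam1
  -- set identity
  have step2 : ∑ s ∈ S, w s • U s = ∑ j, lam j • Ki j := by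
    have per_s : ∀ s ∈ S, w s • U s = ∑ j ∈ s, (β s * lam j) • Ki j := by
      intro s hs
      have hLs : L s ≠ 0 := ne_of_gt (hlamS s hs)
      have e1 : L s • U s = ∑ j ∈ s, lam j • Ki j := by
        rw [hU]
        simp only
        rw [Finset.smul_sum]
        refine Finset.sum_congr rfl fun j _ => ?_
        rw [smul_smul, mul_div_cancel₀ _ hLs]
      calc w s • U s = (β s * L s) • U s := rfl
        _ = β s • L s • U s := by rw [smul_smul]
        _ = β s • ∑ j ∈ s, lam j • Ki j := by rw [e1]
        _ = ∑ j ∈ s, (β s * lam j) • Ki j := by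
            rw [Finset.smul_sum]
            exact Finset.sum_congr rfl fun j _ => by rw [smul_smul]
    rw [Finset.sum_congr rfl per_s, sum_swap_filter]
    refine Finset.sum_congr rfl fun j _ => ?_
    rw [← convex_collapse _ _ _ (hKiConv j) (hKine j)
      (fun s hs => mul_nonneg (hβ0 s (Finset.mem_filter.1 hs).1) (hlam0 j)),
      ← Finset.sum_mul, hpart j, one_mul]
  -- openness / nonemptiness of U s
  have hUopen : ∀ s ∈ S, IsOpen (U s) := by
    intro s hs
    obtain ⟨j0, hj0, hlj0⟩ : ∃ j0 ∈ s, 0 < lam j0 := by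
      by_contra hcon
      push_neg at hcon
      have : L s ≤ 0 := Finset.sum_nonpos fun i hi => hcon i hi
      exact absurd (hlamS s hs) (not_lt.2 this)
    have hcoef : (lam j0 / L s) ≠ 0 := ne_of_gt (div_pos hlj0 (hlamS s hs))
    exact sum_open s _ hj0 ((hKiOpen j0).smul₀ hcoef)
  have hUne : ∀ s ∈ S, (U s).Nonempty := fun s hs =>
    sum_nonempty s _ fun j _ => (hKine j).smul_set
  -- apply the iterated Ehrhard inequality
  have main := multi_ehrhard n hEhrhard S U hUopen hUne w
    (fun s hs => mul_nonneg (hβ0 s hs) (le_of_lt (hlamS s hs))) hw1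
  -- rewrite both sides
  have hLHS : ∑ s ∈ S, β s * (∑ i ∈ s, lam i) *
        stdNormalCDFInv ((stdGaussian n (∑ j ∈ s, (lam j / ∑ i ∈ s, lam i) • K j)).toReal)
      = ∑ s ∈ S, w s * stdNormalCDFInv ((stdGaussian n (U s)).toReal) := by
    refine Finset.sum_congr rfl fun s hs => ?_
    rw [step1 s hs]
  have hRHS : stdGaussian n (∑ s ∈ S, w s • U s) = stdGaussian n (∑ j, lam j • K j) := by
    rw [step2, ← sandwich Finset.univ lam]
  rw [hLHS]
  rw [hRHS] at main
  exact main
end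

section
/- Determinant Brunn-Minkowski inequality with fractional partition for leave-one-out sets: let $K_1, \ldots, K_M$ be positive semi-definite symmetric $n \times n$ real matrices and let $\mathcal{S}$ be a $d$-regular hypergraph on $[M]$. Then $\det(\sum_{j \in [M]} K_j)^{1/n} \ge \frac{1}{d} \sum_{\mathbf{s} \in \mathcal{S}} \det(\sum_{j \in \mathbf{s}} K_j)^{1/n}$. -/
open Matrix Finset
open scoped MatrixOrder

section Aux

variable {n : ℕ}

/-- The determinant of a PSD real matrix is nonnegative. -/
lemma aux_psd_det_nonneg {A : Matrix (Fin n) (Fin n) ℝ} (hA : A.PosSemidef) :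
    0 ≤ A.det := by
  rw [hA.1.det_eq_prod_eigenvalues]
  exact Finset.prod_nonneg fun i _ => by exact_mod_cast hA.eigenvalues_nonneg i

/-- The trace of a Hermitian real matrix is the sum of its eigenvalues. -/
lemma aux_trace_eq_sum_eigenvalues {A : Matrix (Fin n) (Fin n) ℝ} (hA : A.IsHermitian) :
    A.trace = ∑ i, hA.eigenvalues i := by
  rw [hA.trace_eq_sum_eigenvalues]
  simp

/-- A PSD matrix with nonzero determinant is positive definite. -/
lemma aux_psd_posDef_of_det_ne_zero {A : Matrix (Fin n) (Fin n) ℝ}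
    (hA : A.PosSemidef) (h : A.det ≠ 0) : A.PosDef := by
  refine Matrix.posDef_iff_dotProduct_mulVec.mpr ⟨hA.1, fun x hx => ?_⟩
  rcases lt_or_eq_of_le (hA.dotProduct_mulVec_nonneg x) with h' | h'
  · exact h'
  · exfalso
    apply hx
    have hAx : A *ᵥ x = 0 := (hA.dotProduct_mulVec_zero_iff x).mp h'.symm
    have hx0 : A⁻¹ *ᵥ (A *ᵥ x) = x := by
      rw [Matrix.mulVec_mulVec, Matrix.nonsing_inv_mul _ (isUnit_iff_ne_zero.mpr h),
        Matrix.one_mulVec]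
    rw [hAx, Matrix.mulVec_zero] at hx0
    exact hx0.symm

/-- AM-GM for eigenvalues: `det(A)^{1/n} ≤ trace(A)/n` for PSD `A`. -/
lemma aux_det_rpow_le_trace_div (hn : 0 < n) {A : Matrix (Fin n) (Fin n) ℝ}
    (hA : A.PosSemidef) : A.det ^ ((1 : ℝ) / n) ≤ A.trace / n := by
  have hz : ∀ i ∈ (Finset.univ : Finset (Fin n)), 0 ≤ hA.1.eigenvalues i :=
    fun i _ => hA.eigenvalues_nonneg i
  have h := Real.geom_mean_le_arith_mean Finset.univ (fun _ => 1) hA.1.eigenvalues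
    (fun i _ => zero_le_one) (by simp [hn]) hz
  simp only [Real.rpow_one, one_mul, Finset.sum_const, Finset.card_univ,
    Fintype.card_fin, nsmul_eq_mul, mul_one] at h
  have hdet : A.det = ∏ i, hA.1.eigenvalues i := by
    rw [hA.1.det_eq_prod_eigenvalues]; norm_num
  rw [hdet, aux_trace_eq_sum_eigenvalues hA.1, one_div]
  exact h

/-- Minkowski's determinant inequality. -/
lemma aux_minkowski (hn : 0 < n) {A B : Matrix (Fin n) (Fin n) ℝ}
    (hA : A.PosSemidef) (hB : B.PosSemidef) :
    A.det ^ ((1 : ℝ) / n) + B.det ^ ((1 : ℝ) / n) ≤ (A + B).det ^ ((1 : ℝ) / n) := by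
  have hC : (A + B).PosSemidef := hA.add hB
  by_cases hdet : (A + B).det = 0
  · have hA0 : A.det = 0 := by
      by_contra h
      exact ne_of_gt ((aux_psd_posDef_of_det_ne_zero hA h).add_posSemidef hB).det_pos hdet
    have hB0 : B.det = 0 := by
      by_contra h
      exact ne_of_gt (Matrix.PosDef.posSemidef_add hA (aux_psd_posDef_of_det_ne_zero hB h)).det_pos hdet
    rw [hA0, hB0, hdet, Real.zero_rpow (by positivity)]
    norm_num
  · set s : Matrix (Fin n) (Fin n) ℝ := CFC.sqrt (A + B) with hs
    have hspsd : s.PosSemidef := (CFC.sqrt_nonneg (A + B)).posSemidef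
    have hss : s * s = A + B := CFC.sqrt_mul_sqrt_self (A + B) hC.nonneg
    have hsdet : s.det * s.det = (A + B).det := by rw [← Matrix.det_mul, hss]
    have hsne : s.det ≠ 0 := fun h => hdet (by rw [← hsdet, h, zero_mul])
    have hsunit : IsUnit s.det := isUnit_iff_ne_zero.mpr hsne
    have hsherm : s⁻¹.conjTranspose = s⁻¹ := by
      rw [Matrix.conjTranspose_nonsing_inv, hspsd.1]
    have hinv : s * s⁻¹ = 1 := Matrix.mul_nonsing_inv _ hsunit
    have hinv' : s⁻¹ * s = 1 := Matrix.nonsing_inv_mul _ hsunit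
    set A' := s⁻¹ * A * s⁻¹ with hA'def
    set B' := s⁻¹ * B * s⁻¹ with hB'def
    have hA' : A'.PosSemidef := by
      have := hA.mul_mul_conjTranspose_same s⁻¹
      rwa [hsherm] at this
    have hB' : B'.PosSemidef := by
      have := hB.mul_mul_conjTranspose_same s⁻¹
      rwa [hsherm] at this
    have hsum : A' + B' = 1 := by
      rw [hA'def, hB'def, ← Matrix.add_mul, ← Matrix.mul_add, ← hss, ← Matrix.mul_assoc,
        Matrix.mul_assoc (s⁻¹ * s), hinv', Matrix.one_mul, hinv]
    have hCne : (A + B).det ≠ 0 := hdet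
    have hdetA : A.det = A'.det * (A + B).det := by
      rw [hA'def, Matrix.det_mul, Matrix.det_mul, Matrix.det_nonsing_inv,
        Ring.inverse_eq_inv']
      field_simp [← hsdet]
      rw [← hsdet]; ring
    have hdetB : B.det = B'.det * (A + B).det := by
      rw [hB'def, Matrix.det_mul, Matrix.det_mul, Matrix.det_nonsing_inv,
        Ring.inverse_eq_inv']
      field_simp [← hsdet]
      rw [← hsdet]; ring
    have hkey : A'.det ^ ((1 : ℝ) / n) + B'.det ^ ((1 : ℝ) / n) ≤ 1 := by
      have h1 := aux_det_rpow_le_trace_div hn hA'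
      have h2 := aux_det_rpow_le_trace_div hn hB'
      have htr : A'.trace + B'.trace = n := by
        rw [← Matrix.trace_add, hsum, Matrix.trace_one]
        simp
      have hnpos : (0 : ℝ) < n := by exact_mod_cast hn
      calc A'.det ^ ((1 : ℝ) / n) + B'.det ^ ((1 : ℝ) / n)
          ≤ A'.trace / n + B'.trace / n := add_le_add h1 h2
        _ = (A'.trace + B'.trace) / n := by ring
        _ = 1 := by rw [htr]; field_simp
    have hCnn : (0 : ℝ) ≤ (A + B).det := aux_psd_det_nonneg hC
    have hrw : A.det ^ ((1 : ℝ) / n) + B.det ^ ((1 : ℝ) / n)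
        = (A'.det ^ ((1 : ℝ) / n) + B'.det ^ ((1 : ℝ) / n)) * (A + B).det ^ ((1 : ℝ) / n) := by
      rw [hdetA, hdetB, Real.mul_rpow (aux_psd_det_nonneg hA') hCnn,
        Real.mul_rpow (aux_psd_det_nonneg hB') hCnn]
      ring
    rw [hrw]
    nlinarith [Real.rpow_nonneg hCnn ((1 : ℝ) / n),
      Real.rpow_nonneg (aux_psd_det_nonneg hA') ((1 : ℝ) / n),
      Real.rpow_nonneg (aux_psd_det_nonneg hB') ((1 : ℝ) / n)]

/-- PSD is preserved by finite sums. -/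
lemma aux_psd_sum {ι : Type*} (s : Finset ι) (f : ι → Matrix (Fin n) (Fin n) ℝ)
    (hf : ∀ i ∈ s, (f i).PosSemidef) : (∑ i ∈ s, f i).PosSemidef := by
  induction s using Finset.cons_induction with
  | empty => simpa using Matrix.PosSemidef.zero
  | cons a s ha ih =>
    rw [Finset.sum_cons]
    exact (hf a (Finset.mem_cons_self a s)).add
      (ih fun i hi => hf i (Finset.mem_cons_of_mem hi))

/-- Superadditivity of `det^{1/n}` over finite sums of PSD matrices. -/
lemma aux_superadd (hn : 0 < n) {ι : Type*} (s : Finset ι)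
    (f : ι → Matrix (Fin n) (Fin n) ℝ) (hf : ∀ i ∈ s, (f i).PosSemidef) :
    ∑ i ∈ s, (f i).det ^ ((1 : ℝ) / n) ≤ (∑ i ∈ s, f i).det ^ ((1 : ℝ) / n) := by
  induction s using Finset.cons_induction with
  | empty =>
    have hne : Nonempty (Fin n) := ⟨⟨0, hn⟩⟩
    simp only [Finset.sum_empty]
    rw [Matrix.det_zero, Real.zero_rpow (show (1 : ℝ) / n ≠ 0 by positivity)]
  | cons a s ha ih =>
    rw [Finset.sum_cons, Finset.sum_cons]
    calc (f a).det ^ ((1 : ℝ) / n) + ∑ i ∈ s, (f i).det ^ ((1 : ℝ) / n)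
        ≤ (f a).det ^ ((1 : ℝ) / n) + (∑ i ∈ s, f i).det ^ ((1 : ℝ) / n) := by
          gcongr
          exact ih fun i hi => hf i (Finset.mem_cons_of_mem hi)
      _ ≤ (f a + ∑ i ∈ s, f i).det ^ ((1 : ℝ) / n) :=
          aux_minkowski hn (hf a (Finset.mem_cons_self a s))
            (aux_psd_sum s f fun i hi => hf i (Finset.mem_cons_of_mem hi))

end Aux

/-- Determinant Brunn–Minkowski inequality with the degree fractional partition of a
`d`-regular hypergraph: for positive semidefinite symmetric matrices `K j`,
`det(∑ j, K j)^{1/n} ≥ (1/d) ∑ s ∈ S, det(∑ j ∈ s, K j)^{1/n}`. -/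
theorem det_fractional_brunn_minkowski (n M d : ℕ) (hn : 0 < n) (hd : 0 < d)
    (K : Fin M → Matrix (Fin n) (Fin n) ℝ) (hK : ∀ j, (K j).PosSemidef)
    (S : Finset (Finset (Fin M)))
    (hreg : ∀ i : Fin M, (S.filter (fun s => i ∈ s)).card = d) :
    (1 / d : ℝ) * ∑ s ∈ S, (∑ j ∈ s, K j).det ^ ((1 : ℝ) / n)
      ≤ (∑ j, K j).det ^ ((1 : ℝ) / n) := by
  classical
  -- double counting: ∑ s ∈ S, ∑ j ∈ s, K j = d • ∑ j, K j
  have hdc : ∑ s ∈ S, ∑ j ∈ s, K j = d • ∑ j, K j := by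
    have : ∀ s : Finset (Fin M), ∑ j ∈ s, K j
        = ∑ j : Fin M, if j ∈ s then K j else 0 := by
      intro s
      rw [Finset.sum_ite_mem, Finset.univ_inter]
    simp_rw [this]
    rw [Finset.sum_comm]
    rw [Finset.smul_sum]
    refine Finset.sum_congr rfl fun j _ => ?_
    rw [← Finset.sum_filter, Finset.sum_const, hreg j]
    simp
  have hpsd : ∀ s ∈ S, (∑ j ∈ s, K j).PosSemidef :=
    fun s _ => aux_psd_sum s K fun j _ => hK j
  have h1 : ∑ s ∈ S, (∑ j ∈ s, K j).det ^ ((1 : ℝ) / n)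
      ≤ (∑ s ∈ S, ∑ j ∈ s, K j).det ^ ((1 : ℝ) / n) :=
    aux_superadd hn S _ hpsd
  have hdpos : (0 : ℝ) < d := by exact_mod_cast hd
  have hXnn : (0 : ℝ) ≤ (∑ j, K j).det :=
    aux_psd_det_nonneg (aux_psd_sum Finset.univ K fun j _ => hK j)
  have h2 : (∑ s ∈ S, ∑ j ∈ s, K j).det ^ ((1 : ℝ) / n)
      = d * (∑ j, K j).det ^ ((1 : ℝ) / n) := by
    rw [hdc, ← Nat.cast_smul_eq_nsmul ℝ d, Matrix.det_smul, Fintype.card_fin,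
      Real.mul_rpow (by positivity) hXnn, ← Real.rpow_natCast (d : ℝ) n,
      ← Real.rpow_mul hdpos.le]
    have : (n : ℝ) * ((1 : ℝ) / n) = 1 := by
      field_simp
    rw [this, Real.rpow_one]
  rw [h2] at h1
  calc (1 / d : ℝ) * ∑ s ∈ S, (∑ j ∈ s, K j).det ^ ((1 : ℝ) / n)
      ≤ (1 / d : ℝ) * (d * (∑ j, K j).det ^ ((1 : ℝ) / n)) := by
        apply mul_le_mul_of_nonneg_left h1 (by positivity)
    _ = (∑ j, K j).det ^ ((1 : ℝ) / n) := by
        field_simp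
end
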